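/- arXiv:2404.02021 — 5 statements merged into one kernel-verified Lean document; each statement's English description precedes it below -/
import Mathlib

section
/- For every integer k ≥ 3, there is a constant c = c(k) > 0 such that for every integer n > 2^k, there is a simple graph G on m = ⌊c (n / log n)^{√k/(64 (log k)^5)}⌋ vertices with no independent set of size n, and such that for every integer r with k^{1/2}/(16 (log k)^2) ≤ r ≤ k, every set of r vertices of G induces fewer than r^2/(log k)^3 edges (log denotes the natural logarithm). -/
set_option maxHeartbeats 1000000

open Finset

section Weights
variable {ι : Type*} [DecidableEq ι] (p : ℝ)

lemma sum_pow_weights (u : Finset ι) :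
    ∑ E ∈ u.powerset, p ^ E.card * (1 - p) ^ (u \ E).card = 1 := by
  have h := Finset.prod_add (fun _ : ι => p) (fun _ : ι => 1 - p) u
  simp only [prod_const] at h
  rw [← h]
  simp
lemma sum_weights_disjoint (u A : Finset ι) (hA : A ⊆ u) :
    ∑ E ∈ u.powerset.filter (fun E => Disjoint A E), p ^ E.card * (1 - p) ^ (u \ E).card
      = (1 - p) ^ A.card := by
  have hset : u.powerset.filter (fun E => Disjoint A E) = (u \ A).powerset := by
    ext E
    simp only [mem_filter, mem_powerset, subset_sdiff]
    tauto
  rw [hset]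
  have hcard : ∀ E ∈ (u \ A).powerset, (u \ E).card = A.card + ((u \ A) \ E).card := by
    intro E hE
    rw [mem_powerset] at hE
    have hdisj : Disjoint A ((u \ A) \ E) :=
      (disjoint_sdiff.mono_right (sdiff_subset))
    rw [← card_union_of_disjoint hdisj]
    congr 1
    ext x
    simp only [mem_sdiff, mem_union]
    constructor
    · rintro ⟨hxu, hxE⟩
      by_cases hxA : x ∈ A
      · exact Or.inl hxA
      · exact Or.inr ⟨⟨hxu, hxA⟩, hxE⟩
    · rintro (hxA | ⟨⟨hxu, hxA⟩, hxE⟩)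
      · exact ⟨hA hxA, fun hxE => (disjoint_left.mp (subset_sdiff.mp hE).2) hxE hxA⟩
      · exact ⟨hxu, hxE⟩
  calc ∑ E ∈ (u \ A).powerset, p ^ E.card * (1 - p) ^ (u \ E).card
      = ∑ E ∈ (u \ A).powerset, (1 - p) ^ A.card * (p ^ E.card * (1 - p) ^ ((u \ A) \ E).card) := by
        apply sum_congr rfl
        intro E hE
        rw [hcard E hE, pow_add]; ring
    _ = (1 - p) ^ A.card := by rw [← mul_sum, sum_pow_weights, mul_one]

lemma sum_weights_superset (u T : Finset ι) (hT : T ⊆ u) :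
    ∑ E ∈ u.powerset.filter (fun E => T ⊆ E), p ^ E.card * (1 - p) ^ (u \ E).card
      = p ^ T.card := by
  have hset : u.powerset.filter (fun E => T ⊆ E)
      = (u \ T).powerset.image (fun E' => T ∪ E') := by
    ext E
    simp only [mem_filter, mem_powerset, mem_image]
    constructor
    · rintro ⟨hEu, hTE⟩
      refine ⟨E \ T, ?_, by rw [union_sdiff_of_subset hTE]⟩
      rw [subset_sdiff]
      exact ⟨sdiff_subset.trans hEu, sdiff_disjoint⟩
    · rintro ⟨E', hE', rfl⟩
      rw [subset_sdiff] at hE'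
      exact ⟨union_subset hT hE'.1, subset_union_left⟩
  rw [hset, sum_image ?inj]
  case inj =>
    intro E1 h1 E2 h2 heq
    rw [mem_coe, mem_powerset, subset_sdiff] at h1 h2
    have := congrArg (· \ T) heq
    simpa [union_sdiff_cancel_left h1.2.symm, union_sdiff_cancel_left h2.2.symm] using this
  have hterm : ∀ E' ∈ (u \ T).powerset,
      p ^ (T ∪ E').card * (1 - p) ^ (u \ (T ∪ E')).card
        = p ^ T.card * (p ^ E'.card * (1 - p) ^ ((u \ T) \ E').card) := by
    intro E' hE'
    rw [mem_powerset, subset_sdiff] at hE'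
    have hd : Disjoint T E' := hE'.2.symm
    have hsd : u \ (T ∪ E') = (u \ T) \ E' := by
      ext x; simp only [mem_sdiff, mem_union]; tauto
    rw [card_union_of_disjoint hd, hsd, pow_add]
    ring
  rw [sum_congr rfl hterm, ← mul_sum, sum_pow_weights, mul_one]

end Weights

lemma cube_bound {x : ℝ} (hx : 2048 ≤ x) : 8*x^2 + 8 ≤ Real.exp (x/2) := by
  have h6 : (0:ℝ) ≤ x/6 := by linarith
  have h1 : x/6 ≤ Real.exp (x/6) := by
    have := Real.add_one_le_exp (x/6); linarith
  have h2 : (x/6)^3 ≤ Real.exp (x/6)^3 := pow_le_pow_left₀ h6 h1 3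
  have h3 : Real.exp (x/6)^3 = Real.exp (x/2) := by
    rw [← Real.exp_nat_mul]; congr 1; push_cast; ring
  nlinarith [sq_nonneg x, sq_nonneg (x - 2048)]

lemma indep_numeric (n m : ℕ) (x α : ℝ) (h2 : 2 ≤ (n:ℝ)) (hm : 1 ≤ m)
    (hxn : Real.exp x = (n:ℝ)) (hlm : Real.log m ≤ α * x) (hα : α ≤ 2*x) (hα0 : 0 ≤ α)
    (hx : 2048 ≤ x) :
    (m:ℝ)^n * Real.exp (-(Real.exp (-x/2) * (((n:ℝ)^2 - (n:ℝ))/2))) ≤ 1/4 := by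
  have hm0 : (0:ℝ) < m := by exact_mod_cast Nat.lt_of_lt_of_le Nat.zero_lt_one hm
  have h1 : (m:ℝ)^n = Real.exp ((n:ℝ) * Real.log m) := by
    rw [Real.exp_nat_mul, Real.exp_log hm0]
  rw [h1, ← Real.exp_add]
  have hx0 : (0:ℝ) ≤ x := by linarith
  have hex1 : (1:ℝ) ≤ Real.exp x := by have := Real.add_one_le_exp x; linarith
  have key : (n:ℝ) * Real.log m + -(Real.exp (-x/2) * (((n:ℝ)^2 - (n:ℝ))/2)) ≤ -2 := by
    have hn0 : (0:ℝ) ≤ (n:ℝ) := by linarith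
    have hstep1 : (n:ℝ) * Real.log m ≤ Real.exp x * (2*x*x) := by
      calc (n:ℝ) * Real.log m ≤ (n:ℝ) * (α * x) := by
            apply mul_le_mul_of_nonneg_left hlm hn0
        _ ≤ (n:ℝ) * ((2*x) * x) := by
            apply mul_le_mul_of_nonneg_left (mul_le_mul_of_nonneg_right hα hx0) hn0
        _ = Real.exp x * (2*x*x) := by rw [hxn]
    have hppos : (0:ℝ) < Real.exp (-x/2) := Real.exp_pos _
    have e1 : Real.exp (-x/2) * (Real.exp x * Real.exp x) = Real.exp x * Real.exp (x/2) := by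
      rw [← Real.exp_add, ← Real.exp_add, ← Real.exp_add]
      congr 1; ring
    have hsq : Real.exp x * Real.exp x / 2 ≤ (n:ℝ)^2 - (n:ℝ) := by
      rw [hxn]; nlinarith
    have hstep2 : Real.exp x * (Real.exp (x/2)/4) ≤ Real.exp (-x/2) * (((n:ℝ)^2 - (n:ℝ))/2) := by
      nlinarith [hppos, hsq, e1]
    have hcube := cube_bound hx
    have h5 : Real.exp x * ((8*x^2+8)/4) ≤ Real.exp x * (Real.exp (x/2)/4) := by
      gcongr
    nlinarith [hstep1, hstep2, h5, hex1]
  calc Real.exp _ ≤ Real.exp (-2) := Real.exp_le_exp.mpr key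
    _ ≤ 1/4 := by
      rw [Real.exp_neg]
      have h4 : (4:ℝ) ≤ Real.exp 2 := by
        have := Real.exp_one_gt_d9
        have h2e : Real.exp 2 = Real.exp 1 * Real.exp 1 := by
          rw [← Real.exp_add]; norm_num
        nlinarith
      rw [one_div]
      exact inv_anti₀ (by norm_num) h4

lemma sparse_numeric (m r tr kk : ℕ) (x ℓ sk : ℝ)
    (hm1 : 1 ≤ m)
    (hℓ : 8 ≤ ℓ)
    (hsk : 64 * ℓ^5 < sk)
    (hkk : sk^2 = (kk:ℝ))
    (hxk : (kk:ℝ)/2 ≤ x)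
    (hr0 : sk/(16*ℓ^2) ≤ (r:ℝ))
    (hlm : Real.log m ≤ (sk/(64*ℓ^5)) * x)
    (ht : (r:ℝ)^2/ℓ^3 ≤ (tr:ℝ)) :
    (m:ℝ)^r * 2^(r*r) * Real.exp (-x/2)^tr ≤ 1/(4*(kk:ℝ)) := by
  have hℓ0 : (0:ℝ) < ℓ := by linarith
  have hsk0 : (0:ℝ) < sk := by nlinarith [pow_pos hℓ0 5]
  have hK : (4096:ℝ) * ℓ^10 < (kk:ℝ) := by nlinarith [pow_pos hℓ0 5]
  have hK0 : (0:ℝ) < (kk:ℝ) := by nlinarith [pow_pos hℓ0 10]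
  have hx0 : (0:ℝ) ≤ x := by nlinarith
  have hm0 : (0:ℝ) < m := by exact_mod_cast Nat.lt_of_lt_of_le Nat.zero_lt_one hm1
  have hR0 : (0:ℝ) < (r:ℝ) := lt_of_lt_of_le (by positivity) hr0
  -- convert to exponentials
  have e1 : (m:ℝ)^r = Real.exp ((r:ℝ) * Real.log m) := by
    rw [Real.exp_nat_mul, Real.exp_log hm0]
  have e2 : (2:ℝ)^(r*r) = Real.exp ((((r*r):ℕ):ℝ) * Real.log 2) := by
    rw [Real.exp_nat_mul, Real.exp_log (by norm_num : (0:ℝ) < 2)]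
  have e3 : Real.exp (-x/2)^tr = Real.exp ((tr:ℝ) * (-x/2)) := by
    rw [Real.exp_nat_mul]
  rw [e1, e2, e3, ← Real.exp_add, ← Real.exp_add]
  have key : (r:ℝ) * Real.log m + (((r*r):ℕ):ℝ) * Real.log 2 + (tr:ℝ) * (-x/2)
      ≤ -Real.log (4*(kk:ℝ)) := by
    push_cast
    have hlog2 : Real.log 2 ≤ 1 := by
      have := Real.log_le_sub_one_of_pos (by norm_num : (0:ℝ) < 2); linarith
    have hlogK : Real.log (4*(kk:ℝ)) ≤ 4*(kk:ℝ) := by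
      have := Real.log_le_sub_one_of_pos (by positivity : (0:ℝ) < 4*(kk:ℝ)); linarith
    have hRsq : (kk:ℝ)/(256*ℓ^4) ≤ (r:ℝ)^2 := by
      have h1 : (sk/(16*ℓ^2))^2 ≤ (r:ℝ)^2 := by
        apply pow_le_pow_left₀ (by positivity) hr0
      have h2 : (sk/(16*ℓ^2))^2 = (kk:ℝ)/(256*ℓ^4) := by
        rw [div_pow, ← hkk]; ring_nf
      linarith [h2 ▸ h1]
    -- piece (1): r * log m ≤ (r^2/(4ℓ^3)) * x
    have p1 : (r:ℝ) * Real.log m ≤ ((r:ℝ)^2/(4*ℓ^3)) * x := by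
      have ha : sk/(64*ℓ^5) ≤ (r:ℝ)/(4*ℓ^3) := by
        rw [div_le_div_iff₀ (by positivity) (by positivity)]
        calc sk * (4*ℓ^3) = (sk/(16*ℓ^2)) * (64 * ℓ^5) := by field_simp; ring
          _ ≤ (r:ℝ) * (64*ℓ^5) := by
              apply mul_le_mul_of_nonneg_right hr0 (by positivity)
      calc (r:ℝ) * Real.log m ≤ (r:ℝ) * ((sk/(64*ℓ^5)) * x) :=
            mul_le_mul_of_nonneg_left hlm (le_of_lt hR0)
        _ ≤ (r:ℝ) * (((r:ℝ)/(4*ℓ^3)) * x) := by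
            apply mul_le_mul_of_nonneg_left (mul_le_mul_of_nonneg_right ha hx0) (le_of_lt hR0)
        _ = ((r:ℝ)^2/(4*ℓ^3)) * x := by ring
    -- piece (2): r^2 * log 2 + log(4kk) ≤ (r^2/(4ℓ^3)) * x
    have p2 : (r:ℝ)*(r:ℝ) * Real.log 2 + Real.log (4*(kk:ℝ)) ≤ ((r:ℝ)^2/(4*ℓ^3)) * x := by
      have hx2 : (r:ℝ)^2*(kk:ℝ)/(8*ℓ^3) ≤ ((r:ℝ)^2/(4*ℓ^3))*x := by
        have h := mul_le_mul_of_nonneg_left hxk (by positivity : (0:ℝ) ≤ (r:ℝ)^2/(4*ℓ^3))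
        calc (r:ℝ)^2*(kk:ℝ)/(8*ℓ^3) = ((r:ℝ)^2/(4*ℓ^3))*((kk:ℝ)/2) := by ring
          _ ≤ ((r:ℝ)^2/(4*ℓ^3))*x := h
      have hl310 : ℓ^3 ≤ ℓ^10 := pow_le_pow_right₀ (by linarith : (1:ℝ) ≤ ℓ) (by norm_num)
      have hk16 : 16*ℓ^3 ≤ (kk:ℝ) := by nlinarith [pow_nonneg hℓ0.le 10]
      have hRsq' : (kk:ℝ) ≤ (r:ℝ)^2*(256*ℓ^4) := by
        rw [div_le_iff₀ (by positivity)] at hRsq; linarith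
      have hℓcube : (512:ℝ) ≤ ℓ^3 := by
        nlinarith [pow_le_pow_left₀ (by norm_num : (0:ℝ) ≤ 8) hℓ 3]
      have hr16 : 16*ℓ^6 ≤ (r:ℝ)^2 := by
        have h256 : (0:ℝ) < 256*ℓ^4 := by positivity
        have h16 : 16*ℓ^6*(256*ℓ^4) ≤ (r:ℝ)^2*(256*ℓ^4) := by nlinarith
        exact le_of_mul_le_mul_right h16 h256
      have hr64 : 64*ℓ^3 ≤ (r:ℝ)^2 := by
        have h6 : ℓ^6 = ℓ^3*ℓ^3 := by ring
        nlinarith [pow_pos hℓ0 3]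
      have hcore : ((r:ℝ)^2 + 4*(kk:ℝ))*(8*ℓ^3) ≤ (r:ℝ)^2*(kk:ℝ) := by
        have t1 : (0:ℝ) ≤ ((kk:ℝ) - 16*ℓ^3) * (r:ℝ)^2 :=
          mul_nonneg (by linarith) (sq_nonneg _)
        have t2 : (0:ℝ) ≤ ((r:ℝ)^2 - 64*ℓ^3) * (kk:ℝ) :=
          mul_nonneg (by linarith) hK0.le
        nlinarith [t1, t2]
      have hP : (r:ℝ)^2 + 4*(kk:ℝ) ≤ (r:ℝ)^2*(kk:ℝ)/(8*ℓ^3) := by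
        rw [le_div_iff₀ (by positivity)]; exact hcore
      have hlog2' : (r:ℝ)*(r:ℝ)*Real.log 2 ≤ (r:ℝ)^2 := by
        have h0 : (0:ℝ) ≤ (r:ℝ)*(r:ℝ) := by positivity
        nlinarith [mul_le_mul_of_nonneg_left hlog2 h0]
      linarith [hlog2', hlogK, hP, hx2]
    have hfin : (r:ℝ)*(r:ℝ)*Real.log 2 + Real.log (4*(kk:ℝ)) + (r:ℝ)*Real.log m
        ≤ ((r:ℝ)^2/(2*ℓ^3)) * x := by
      have : ((r:ℝ)^2/(4*ℓ^3)) * x + ((r:ℝ)^2/(4*ℓ^3)) * x = ((r:ℝ)^2/(2*ℓ^3)) * x := by ring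
      linarith [p1, p2]
    have htx : ((r:ℝ)^2/(2*ℓ^3)) * x ≤ (tr:ℝ) * (x/2) := by
      have : (r:ℝ)^2/ℓ^3 * (x/2) ≤ (tr:ℝ) * (x/2) :=
        mul_le_mul_of_nonneg_right ht (by positivity)
      calc ((r:ℝ)^2/(2*ℓ^3)) * x = (r:ℝ)^2/ℓ^3 * (x/2) := by ring
        _ ≤ (tr:ℝ) * (x/2) := this
    nlinarith [hfin, htx]
  calc Real.exp _ ≤ Real.exp (-Real.log (4*(kk:ℝ))) := Real.exp_le_exp.mpr key
    _ = 1/(4*(kk:ℝ)) := by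
      rw [Real.exp_neg, Real.exp_log (by positivity), one_div]


section Helpers
variable {β κ : Type*}

lemma sum_filter_or_le (f : β → ℝ) (s : Finset β) (hf : ∀ x ∈ s, 0 ≤ f x)
    (P Q : β → Prop) [DecidablePred P] [DecidablePred Q]
    [DecidablePred (fun x => P x ∨ Q x)] :
    ∑ x ∈ s.filter (fun x => P x ∨ Q x), f x
      ≤ ∑ x ∈ s.filter P, f x + ∑ x ∈ s.filter Q, f x := by
  classical
  have hsub : s.filter (fun x => P x ∨ Q x) ⊆ s.filter P ∪ s.filter Q := by
    intro x hx
    rw [mem_filter] at hx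
    rcases hx.2 with h | h
    · exact mem_union_left _ (mem_filter.mpr ⟨hx.1, h⟩)
    · exact mem_union_right _ (mem_filter.mpr ⟨hx.1, h⟩)
  have h1 : ∑ x ∈ s.filter (fun x => P x ∨ Q x), f x ≤ ∑ x ∈ s.filter P ∪ s.filter Q, f x := by
    apply sum_le_sum_of_subset_of_nonneg hsub
    intro x hx _
    exact hf x (mem_union.mp hx |>.elim (fun h => mem_filter.mp h |>.1) (fun h => mem_filter.mp h |>.1))
  have h2 := Finset.sum_union_inter (s₁ := s.filter P) (s₂ := s.filter Q) (f := f)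
  have h3 : 0 ≤ ∑ x ∈ s.filter P ∩ s.filter Q, f x := by
    apply sum_nonneg
    intro x hx
    exact hf x (mem_filter.mp (mem_of_mem_inter_left hx) |>.1)
  linarith

lemma sum_filter_exists_le (f : β → ℝ) (s : Finset β) (hf : ∀ x ∈ s, 0 ≤ f x)
    (I : Finset κ) (R : κ → β → Prop) [∀ i, DecidablePred (R i)]
    [DecidablePred (fun x => ∃ i ∈ I, R i x)] :
    ∑ x ∈ s.filter (fun x => ∃ i ∈ I, R i x), f x ≤ ∑ i ∈ I, ∑ x ∈ s.filter (R i), f x := by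
  classical
  calc ∑ x ∈ s.filter (fun x => ∃ i ∈ I, R i x), f x
      ≤ ∑ x ∈ s.filter (fun x => ∃ i ∈ I, R i x), ∑ i ∈ I, if R i x then f x else 0 := by
        apply Finset.sum_le_sum
        intro x hx
        rw [Finset.mem_filter] at hx
        obtain ⟨i, hiI, hR⟩ := hx.2
        have hfx := hf x hx.1
        calc f x = if R i x then f x else 0 := by rw [if_pos hR]
          _ ≤ ∑ i ∈ I, if R i x then f x else 0 := by
              apply Finset.single_le_sum (f := fun i => if R i x then f x else 0) _ hiI
              intro j _
              by_cases h : R j x <;> simp [h, hfx]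
    _ = ∑ i ∈ I, ∑ x ∈ s.filter (fun x => ∃ i ∈ I, R i x), if R i x then f x else 0 :=
        Finset.sum_comm
    _ ≤ ∑ i ∈ I, ∑ x ∈ s.filter (R i), f x := by
        apply Finset.sum_le_sum
        intro i _
        rw [← Finset.sum_filter]
        apply Finset.sum_le_sum_of_subset_of_nonneg
        · rw [Finset.filter_filter]
          intro x hx
          rw [Finset.mem_filter] at hx ⊢
          exact ⟨hx.1, hx.2.2⟩
        · intro x hx _
          exact hf x (Finset.mem_filter.mp hx).1

end Helpers


lemma main_construction (k n m : ℕ) (hk : 3 ≤ k) (hn : 2^k < n) (hnm : n ≤ m)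
    (hm : (m:ℝ) ≤ ((n:ℝ)/Real.log n) ^ (Real.sqrt k / (64 * Real.log k ^ 5)))
    (halpha : 1 < Real.sqrt k / (64 * Real.log k ^ 5)) :
    ∃ G : SimpleGraph (Fin m),
      (∀ s : Finset (Fin m), s.card = n → ∃ u ∈ s, ∃ v ∈ s, G.Adj u v) ∧
      (∀ r : ℕ, Real.sqrt k / (16 * Real.log k ^ 2) ≤ (r : ℝ) → r ≤ k →
        ∀ W : Finset (Fin m), W.card = r →
          (Set.ncard {e ∈ G.edgeSet | ∀ v ∈ e, v ∈ W} : ℝ) < (r : ℝ) ^ 2 / Real.log k ^ 3) := by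
  classical
  set x : ℝ := Real.log n with hxdef
  set ℓ : ℝ := Real.log k with hldef
  set sk : ℝ := Real.sqrt k with hskdef
  set p : ℝ := Real.exp (-x/2) with hpdef
  -- basic numeric facts
  have hk0 : (0:ℝ) < k := by positivity
  have hsk2 : sk^2 = (k:ℝ) := Real.sq_sqrt (by positivity)
  have hℓ1 : (1:ℝ) ≤ ℓ := by
    have h3 : Real.exp 1 ≤ 3 := by nlinarith [Real.exp_one_lt_d9]
    have h1 : (1:ℝ) ≤ Real.log 3 := by
      rw [Real.le_log_iff_exp_le (by norm_num)]; exact h3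
    have h2 : Real.log 3 ≤ Real.log k :=
      Real.log_le_log (by norm_num) (by exact_mod_cast hk)
    rw [hldef]; linarith
  have hℓ0 : (0:ℝ) < ℓ := by linarith
  have hsk64 : 64*ℓ^5 < sk := by
    rw [← one_lt_div (by positivity : (0:ℝ) < 64*ℓ^5)]
    exact halpha
  have hsk0 : (0:ℝ) < sk := by nlinarith [pow_pos hℓ0 5]
  have hKreal : 4096*ℓ^10 < (k:ℝ) := by nlinarith [pow_pos hℓ0 5]
  have hk4096 : (4096:ℝ) < k := by
    nlinarith [pow_le_pow_left₀ zero_le_one hℓ1 10]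
  have hℓ8 : (8:ℝ) ≤ ℓ := by
    have h1 : Real.log 4096 ≤ ℓ := by
      rw [hldef]
      exact Real.log_le_log (by norm_num) (by linarith)
    have h2 : Real.log 4096 = 12 * Real.log 2 := by
      rw [show (4096:ℝ) = 2^12 by norm_num, Real.log_pow]
      push_cast; ring
    nlinarith [Real.log_two_gt_d9]
  have hn9 : 9 ≤ n := by
    have : 8 ≤ 2^k := by
      calc 8 = 2^3 := by norm_num
        _ ≤ 2^k := Nat.pow_le_pow_right (by norm_num) hk
    omega
  have hn0 : (0:ℝ) < n := by positivity
  have hnn : (0:ℝ) < n := by exact_mod_cast Nat.lt_of_lt_of_le (by norm_num) hn9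
  have h2kn : (2:ℝ)^k < (n:ℝ) := by exact_mod_cast hn
  have hx_gt : (k:ℝ) * Real.log 2 < x := by
    rw [hxdef, ← Real.log_pow]
    exact Real.log_lt_log (by positivity) h2kn
  have hxk2 : (k:ℝ)/2 ≤ x := by nlinarith [Real.log_two_gt_d9]
  have hx2048 : (2048:ℝ) ≤ x := by nlinarith
  have hx1 : (1:ℝ) ≤ x := by linarith
  have hx0 : (0:ℝ) ≤ x := by linarith
  have hm1 : 1 ≤ m := le_trans (by omega) hnm
  have hm0 : (0:ℝ) < m := by exact_mod_cast Nat.lt_of_lt_of_le Nat.zero_lt_one hm1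
  have hlogm : Real.log m ≤ (sk/(64*ℓ^5)) * x := by
    have h1 : Real.log m ≤ Real.log (((n:ℝ)/x) ^ (sk / (64 * ℓ^5))) := by
      apply Real.log_le_log hm0
      exact hm
    rw [Real.log_rpow (by positivity)] at h1
    have h2 : Real.log ((n:ℝ)/x) ≤ x := by
      have hle : (n:ℝ)/x ≤ n := by
        rw [div_le_iff₀ (by linarith)]
        nlinarith
      calc Real.log ((n:ℝ)/x) ≤ Real.log n := Real.log_le_log (by positivity) hle
        _ = x := hxdef.symm
    calc Real.log m ≤ (sk/(64*ℓ^5)) * Real.log ((n:ℝ)/x) := h1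
      _ ≤ (sk/(64*ℓ^5)) * x := by
          apply mul_le_mul_of_nonneg_left h2 (by positivity)
  have hα2x : sk/(64*ℓ^5) ≤ 2*x := by
    have h1 : sk/(64*ℓ^5) ≤ sk := by
      apply div_le_self hsk0.le
      nlinarith [pow_le_pow_left₀ zero_le_one hℓ1 5]
    have h2 : sk ≤ sk^2 := by nlinarith
    rw [hsk2] at h2
    linarith
  have hp0 : (0:ℝ) ≤ p := (Real.exp_pos _).le
  have hp1 : p ≤ 1 := by
    rw [hpdef]
    exact Real.exp_le_one_iff.mpr (by linarith)
  -- combinatorial setup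
  set U : Finset (Sym2 (Fin m)) := Finset.univ.filter (fun e => ¬ e.IsDiag) with hUdef
  set w : Finset (Sym2 (Fin m)) → ℝ := fun E => p ^ E.card * (1 - p) ^ (U \ E).card with hwdef
  have hw0 : ∀ E, 0 ≤ w E := fun E =>
    mul_nonneg (pow_nonneg hp0 _) (pow_nonneg (by linarith) _)
  set tt : ℕ → ℕ := fun r => ⌈(r:ℝ)^2 / ℓ^3⌉₊ with httdef
  set pairs : Finset (Fin m) → Finset (Sym2 (Fin m)) :=
    fun W => U.filter (fun e => ∀ v ∈ e, v ∈ W) with hpairsdef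
  set As : Finset (Fin m) → Finset (Sym2 (Fin m)) :=
    fun S => S.offDiag.image (Function.uncurry Sym2.mk) with hAsdef
  set BadI : Finset (Sym2 (Fin m)) → Prop :=
    fun E => ∃ S ∈ (Finset.univ : Finset (Fin m)).powersetCard n, Disjoint (As S) E with hBIdef
  set Idx : Finset ((_ : ℕ) × Finset (Fin m)) :=
    (Finset.range (k+1)).sigma (fun r => (Finset.univ : Finset (Fin m)).powersetCard r) with hIdxdef
  set RS : ((_ : ℕ) × Finset (Fin m)) → Finset (Sym2 (Fin m)) → Prop :=
    fun i E => (sk/(16*ℓ^2) ≤ (i.1:ℝ)) ∧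
      tt i.1 ≤ (E.filter (fun e => ∀ v ∈ e, v ∈ i.2)).card with hRSdef
  set BadS : Finset (Sym2 (Fin m)) → Prop := fun E => ∃ i ∈ Idx, RS i E with hBSdef
  have hgood : ∃ E ∈ U.powerset, ¬ BadI E ∧ ¬ BadS E := by
    by_contra hcon
    push_neg at hcon
    have hone : ∑ E ∈ U.powerset, w E = 1 := sum_pow_weights p U
    have hcover : U.powerset.filter (fun E => BadI E ∨ BadS E) = U.powerset := by
      apply Finset.filter_true_of_mem
      intro E hE
      by_cases h : BadI E
      · exact Or.inl h
      · exact Or.inr (hcon E hE h)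
    have hI : ∑ E ∈ U.powerset.filter BadI, w E ≤ 1/4 := by
      have hstep := sum_filter_exists_le w U.powerset (fun E _ => hw0 E)
        ((Finset.univ : Finset (Fin m)).powersetCard n) (fun S E => Disjoint (As S) E)
      refine le_trans hstep ?_
      have hper : ∀ S ∈ (Finset.univ : Finset (Fin m)).powersetCard n,
          ∑ E ∈ U.powerset.filter (fun E => Disjoint (As S) E), w E
            ≤ Real.exp (-(p * (((n:ℝ)^2 - (n:ℝ))/2))) := by
        intro S hSmem
        have hScard : S.card = n := (mem_powersetCard.mp hSmem).2
        have hAsub : As S ⊆ U := by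
          intro e he
          rw [hAsdef] at he
          obtain ⟨⟨a,b⟩, hab, rfl⟩ := mem_image.mp he
          rw [Finset.mem_offDiag] at hab
          rw [hUdef, mem_filter]
          exact ⟨mem_univ _, by rw [Function.uncurry_apply_pair, Sym2.mk_isDiag_iff]; exact hab.2.2⟩
        have heq : ∑ E ∈ U.powerset.filter (fun E => Disjoint (As S) E), w E
            = (1-p)^((As S).card) := by
          rw [hwdef]
          exact sum_weights_disjoint p U (As S) hAsub
        rw [heq]
        have hfib : ∀ b ∈ S.offDiag.image (Function.uncurry Sym2.mk),
            (S.offDiag.filter (fun a => Function.uncurry Sym2.mk a = b)).card ≤ 2 := by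
          intro b hb
          obtain ⟨⟨y,z⟩, hyz, rfl⟩ := mem_image.mp hb
          have hsub2 : S.offDiag.filter (fun a => Function.uncurry Sym2.mk a = Function.uncurry Sym2.mk (y,z))
              ⊆ ({(y,z),(z,y)} : Finset ((Fin m) × (Fin m))) := by
            intro q hq
            obtain ⟨u,v⟩ := q
            rw [mem_filter] at hq
            rcases Sym2.eq_iff.mp hq.2 with ⟨h1,h2⟩ | ⟨h1,h2⟩ <;> simp only at h1 h2 <;>
              simp [Finset.mem_insert, Prod.ext_iff, h1, h2]
          refine le_trans (card_le_card hsub2) ?_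
          refine le_trans (card_insert_le _ _) ?_
          simp
        have hcard2 : (n*n - n : ℕ) ≤ 2 * ((As S).card) := by
          have h := Finset.card_le_mul_card_image (s := S.offDiag) (f := Function.uncurry Sym2.mk) 2 hfib
          rw [Finset.offDiag_card, hScard] at h
          rw [hAsdef]
          exact h
        have hcardR : ((n:ℝ)^2 - (n:ℝ))/2 ≤ ((As S).card : ℝ) := by
          have hle : n ≤ n*n := Nat.le_mul_of_pos_left n (by omega)
          have hc := (Nat.cast_le (α := ℝ)).mpr hcard2
          push_cast [Nat.cast_sub hle] at hc
          nlinarith [hc]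
        have h1p : 1 - p ≤ Real.exp (-p) := by
          have := Real.add_one_le_exp (-p); linarith
        have h2 : (1-p)^((As S).card) ≤ Real.exp (-p)^((As S).card) :=
          pow_le_pow_left₀ (by linarith) h1p _
        rw [← Real.exp_nat_mul] at h2
        refine le_trans h2 (Real.exp_le_exp.mpr ?_)
        have hmul : p * (((n:ℝ)^2 - (n:ℝ))/2) ≤ p * ((As S).card : ℝ) :=
          mul_le_mul_of_nonneg_left hcardR hp0
        nlinarith [hmul]
      refine le_trans (sum_le_sum hper) ?_
      rw [sum_const, card_powersetCard, card_univ, Fintype.card_fin, nsmul_eq_mul]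
      have hchoose : ((m.choose n):ℝ) ≤ (m:ℝ)^n := by
        exact_mod_cast Nat.choose_le_pow m n
      refine le_trans (mul_le_mul_of_nonneg_right hchoose (Real.exp_pos _).le) ?_
      rw [hpdef]
      exact indep_numeric n m x (sk/(64*ℓ^5)) (by exact_mod_cast (by omega : 2 ≤ n)) hm1
        (Real.exp_log hn0) hlogm hα2x (by positivity) hx2048
    have hS : ∑ E ∈ U.powerset.filter BadS, w E ≤ 1/2 := by
      have hstep := sum_filter_exists_le w U.powerset (fun E _ => hw0 E) Idx RS
      refine le_trans hstep ?_
      set B : ℕ → ℝ := fun r => if sk/(16*ℓ^2) ≤ (r:ℝ) then (2:ℝ)^(r*r) * p^(tt r) else 0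
        with hBdef
      have hper : ∀ i ∈ Idx, ∑ E ∈ U.powerset.filter (RS i), w E ≤ B i.1 := by
        intro i hiIdx
        obtain ⟨r, W⟩ := i
        rw [hIdxdef, mem_sigma] at hiIdx
        have hWcard : W.card = r := (mem_powersetCard.mp hiIdx.2).2
        by_cases hcond : sk/(16*ℓ^2) ≤ (r:ℝ)
        · have hsub : U.powerset.filter (RS ⟨r, W⟩)
              ⊆ U.powerset.filter (fun E => ∃ T ∈ (pairs W).powersetCard (tt r), T ⊆ E) := by
            intro E hE
            rw [mem_filter] at hE ⊢
            obtain ⟨hEP', hRS2⟩ := hE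
            obtain ⟨T, hTsub, hTcard⟩ := Finset.exists_subset_card_eq hRS2.2
            refine ⟨hEP', T, mem_powersetCard.mpr ⟨?_, hTcard⟩, hTsub.trans (filter_subset _ _)⟩
            rw [hpairsdef]
            exact hTsub.trans (filter_subset_filter _ (mem_powerset.mp hEP'))
          refine le_trans (sum_le_sum_of_subset_of_nonneg hsub (fun E _ _ => hw0 E)) ?_
          have hstep2 := sum_filter_exists_le w U.powerset (fun E _ => hw0 E)
            ((pairs W).powersetCard (tt r)) (fun T E => T ⊆ E)
          refine le_trans hstep2 ?_
          have hperT : ∀ T ∈ (pairs W).powersetCard (tt r),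
              ∑ E ∈ U.powerset.filter (fun E => T ⊆ E), w E = p ^ (tt r) := by
            intro T hT
            rw [mem_powersetCard] at hT
            have hTU : T ⊆ U := hT.1.trans (by rw [hpairsdef]; exact filter_subset _ _)
            rw [hwdef, sum_weights_superset p U T hTU, hT.2]
          rw [sum_congr rfl hperT, sum_const, nsmul_eq_mul]
          have hcount : ((((pairs W).powersetCard (tt r)).card :ℕ):ℝ) ≤ (2:ℝ)^(r*r) := by
            have c1 : (pairs W).powersetCard (tt r) ⊆ (pairs W).powerset :=
              fun T hT => mem_powerset.mpr (mem_powersetCard.mp hT).1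
            have c2 : (pairs W).card ≤ r*r := by
              have cle := Finset.card_le_card_of_injOn (s := pairs W)
                (fun e : Sym2 (Fin m) => e.out) (t := W ×ˢ W) ?maps ?inj
              case maps =>
                intro e he
                rw [mem_coe, hpairsdef, mem_filter] at he
                exact mem_product.mpr ⟨he.2 _ (Sym2.out_fst_mem e), he.2 _ (Sym2.out_snd_mem e)⟩
              case inj =>
                intro e1 _ e2 _ h
                simp only at h
                rw [← Quot.out_eq e1, ← Quot.out_eq e2, h]
              rw [card_product, hWcard] at cle
              exact cle
            have c3 : ((pairs W).powersetCard (tt r)).card ≤ 2^(r*r) := by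
              refine le_trans (card_le_card c1) ?_
              rw [card_powerset]
              exact Nat.pow_le_pow_right (by norm_num) c2
            calc ((((pairs W).powersetCard (tt r)).card :ℕ):ℝ) ≤ ((2^(r*r) : ℕ):ℝ) := by
                  exact_mod_cast c3
              _ = (2:ℝ)^(r*r) := by push_cast; ring
          have hfin : ((((pairs W).powersetCard (tt r)).card :ℕ):ℝ) * p^(tt r)
              ≤ (2:ℝ)^(r*r) * p^(tt r) :=
            mul_le_mul_of_nonneg_right hcount (pow_nonneg hp0 _)
          refine le_trans hfin ?_
          rw [hBdef]
          simp only [if_pos hcond]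
          exact le_refl _
        · have hempty : U.powerset.filter (RS ⟨r,W⟩) = ∅ := by
            rw [filter_eq_empty_iff]
            intro E _
            rw [hRSdef]
            exact fun h => hcond h.1
          rw [hempty, sum_empty, hBdef]
          simp only [if_neg hcond]
          exact le_refl _
      refine le_trans (sum_le_sum hper) ?_
      rw [hIdxdef, Finset.sum_sigma]
      have hper2 : ∀ r ∈ Finset.range (k+1),
          ∑ _W ∈ (Finset.univ : Finset (Fin m)).powersetCard r, B r ≤ 1/(4*(k:ℝ)) := by
        intro r hr
        rw [sum_const, card_powersetCard, card_univ, Fintype.card_fin, nsmul_eq_mul]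
        by_cases hcond : sk/(16*ℓ^2) ≤ (r:ℝ)
        · rw [hBdef]
          simp only [if_pos hcond]
          have hchoose : ((m.choose r):ℝ) ≤ (m:ℝ)^r := by
            exact_mod_cast Nat.choose_le_pow m r
          calc ((m.choose r):ℝ) * ((2:ℝ)^(r*r) * p^(tt r))
              ≤ (m:ℝ)^r * ((2:ℝ)^(r*r) * p^(tt r)) :=
                mul_le_mul_of_nonneg_right hchoose (by positivity)
            _ = (m:ℝ)^r * (2:ℝ)^(r*r) * p^(tt r) := by ring
            _ ≤ 1/(4*(k:ℝ)) := by
                rw [hpdef]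
                exact sparse_numeric m r (tt r) k x ℓ sk hm1 hℓ8 hsk64 hsk2 hxk2 hcond hlogm
                  (by rw [httdef]; exact Nat.le_ceil _)
        · rw [hBdef]
          simp only [if_neg hcond]
          rw [mul_zero]
          positivity
      refine le_trans (sum_le_sum hper2) ?_
      rw [sum_const, card_range, nsmul_eq_mul]
      have hk1 : (3:ℝ) ≤ (k:ℝ) := by exact_mod_cast hk
      rw [mul_one_div, div_le_iff₀ (by positivity)]
      push_cast
      linarith
    have hsplit := sum_filter_or_le w U.powerset (fun E _ => hw0 E) BadI BadS
    rw [hcover, hone] at hsplit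
    linarith
  obtain ⟨E, hEP, hnBI, hnBS⟩ := hgood
  have hEU : E ⊆ U := mem_powerset.mp hEP
  refine ⟨SimpleGraph.fromEdgeSet (↑E : Set (Sym2 (Fin m))), ?_, ?_⟩
  · intro S hS
    have hmem : S ∈ (Finset.univ : Finset (Fin m)).powersetCard n :=
      mem_powersetCard.mpr ⟨subset_univ _, hS⟩
    have hnd : ¬ Disjoint (As S) E := fun h => hnBI ⟨S, hmem, h⟩
    obtain ⟨e, heA, heE⟩ := Finset.not_disjoint_iff.mp hnd
    have heA' : e ∈ As S := heA
    rw [hAsdef] at heA'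
    obtain ⟨⟨a,b⟩, hab, rfl⟩ := mem_image.mp heA'
    rw [Finset.mem_offDiag] at hab
    refine ⟨a, hab.1, b, hab.2.1, ?_⟩
    rw [SimpleGraph.fromEdgeSet_adj]
    exact ⟨Finset.mem_coe.mpr heE, hab.2.2⟩
  · intro r hr0 hrk W hW
    have hi : (⟨r, W⟩ : (_ : ℕ) × Finset (Fin m)) ∈ Idx := by
      rw [hIdxdef]
      exact mem_sigma.mpr ⟨mem_range.mpr (Nat.lt_succ_of_le hrk),
        mem_powersetCard.mpr ⟨subset_univ _, hW⟩⟩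
    have hnr : ¬ RS ⟨r, W⟩ E := fun h => hnBS ⟨_, hi, h⟩
    have hcnt : (E.filter (fun e => ∀ v ∈ e, v ∈ W)).card < tt r := by
      by_contra h
      push_neg at h
      exact hnr ⟨hr0, h⟩
    have hset : {e ∈ (SimpleGraph.fromEdgeSet (↑E : Set (Sym2 (Fin m)))).edgeSet |
        ∀ v ∈ e, v ∈ W} = ↑(E.filter (fun e => ∀ v ∈ e, v ∈ W)) := by
      rw [SimpleGraph.edgeSet_fromEdgeSet]
      ext e
      simp only [Set.mem_setOf_eq, Set.mem_diff, Finset.coe_filter, Finset.mem_coe]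
      constructor
      · rintro ⟨⟨he, _⟩, hall⟩; exact ⟨he, hall⟩
      · rintro ⟨he, hall⟩
        refine ⟨⟨he, ?_⟩, hall⟩
        have := hEU he
        rw [hUdef, mem_filter] at this
        exact this.2
    rw [hset, Set.ncard_coe_finset]
    have hfin := Nat.lt_ceil.mp hcnt
    rw [hldef] at hfin
    exact_mod_cast hfin



/-- For every `k ≥ 3` there is `c > 0` such that for every `n > 2^k` there
is a graph `G` on `m = ⌊c (n / log n)^{√k/(64 (log k)^5)}⌋` vertices with no independent set
of size `n`, in which every set of `r` vertices, for every `√k/(16 (log k)²) ≤ r ≤ k`,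
induces fewer than `r²/(log k)³` edges. -/
theorem exists_sparse_low_independence_graph (k : ℕ) (hk : 3 ≤ k) :
    ∃ c : ℝ, c > 0 ∧ ∀ n : ℕ, 2 ^ k < n →
      ∀ m : ℕ,
        m = ⌊c * ((n : ℝ) / Real.log n) ^ (Real.sqrt k / (64 * Real.log k ^ 5))⌋₊ →
        ∃ G : SimpleGraph (Fin m),
          (∀ s : Finset (Fin m), s.card = n → ∃ u ∈ s, ∃ v ∈ s, G.Adj u v) ∧
          (∀ r : ℕ, Real.sqrt k / (16 * Real.log k ^ 2) ≤ (r : ℝ) → r ≤ k →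
            ∀ W : Finset (Fin m), W.card = r →
              (Set.ncard {e ∈ G.edgeSet | ∀ v ∈ e, v ∈ W} : ℝ) <
                (r : ℝ) ^ 2 / Real.log k ^ 3) := by
  refine ⟨1, one_pos, ?_⟩
  intro n hn m hm
  rw [one_mul] at hm
  by_cases hcase : n ≤ m
  · have hn9 : 9 ≤ n := by
      have : 8 ≤ 2^k := by
        calc 8 = 2^3 := by norm_num
          _ ≤ 2^k := Nat.pow_le_pow_right (by norm_num) hk
      omega
    have hn0 : (0:ℝ) < n := by
      have : (9:ℝ) ≤ n := by exact_mod_cast hn9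
      linarith
    have hx1 : (1:ℝ) < Real.log n := by
      have h9 : (9:ℝ) ≤ n := by exact_mod_cast hn9
      have hmono : Real.log 9 ≤ Real.log n := Real.log_le_log (by norm_num) h9
      have h2 : (2:ℝ) < Real.log 9 := by
        rw [Real.lt_log_iff_exp_lt (by norm_num)]
        have he : Real.exp 2 = Real.exp 1 * Real.exp 1 := by
          rw [← Real.exp_add]; norm_num
        nlinarith [Real.exp_one_lt_d9, Real.exp_pos 1]
      linarith
    have hy0 : (0:ℝ) ≤ ((n:ℝ)/Real.log n) ^ (Real.sqrt k / (64*Real.log k^5)) :=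
      Real.rpow_nonneg (by positivity) _
    have hmle : (m:ℝ) ≤ ((n:ℝ)/Real.log n) ^ (Real.sqrt k / (64*Real.log k^5)) := by
      rw [hm]
      exact Nat.floor_le hy0
    have halpha : 1 < Real.sqrt k / (64*Real.log k^5) := by
      by_contra hle
      push_neg at hle
      have hb1 : (1:ℝ) ≤ (n:ℝ)/Real.log n := by
        rw [le_div_iff₀ (by linarith)]
        have := Real.log_le_sub_one_of_pos hn0
        linarith
      have hble : ((n:ℝ)/Real.log n) ^ (Real.sqrt k / (64*Real.log k^5))
          ≤ ((n:ℝ)/Real.log n) ^ (1:ℝ) :=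
        Real.rpow_le_rpow_of_exponent_le hb1 hle
      rw [Real.rpow_one] at hble
      have hlt : (n:ℝ)/Real.log n < n := by
        rw [div_lt_iff₀ (by linarith)]
        nlinarith
      have hcast : (n:ℝ) ≤ m := by exact_mod_cast hcase
      linarith
    exact main_construction k n m hk hn hcase hmle halpha
  · push_neg at hcase
    refine ⟨⊥, ?_, ?_⟩
    · intro s hs
      exfalso
      have := Finset.card_le_univ s
      rw [Fintype.card_fin] at this
      omega
    · intro r hr0 hrk W hW
      have hset : {e ∈ (⊥ : SimpleGraph (Fin m)).edgeSet | ∀ v ∈ e, v ∈ W} = ∅ := by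
        rw [SimpleGraph.edgeSet_bot]
        simp
      rw [hset, Set.ncard_empty]
      have hk1R : (1:ℝ) < k := by
        have : (3:ℝ) ≤ k := by exact_mod_cast hk
        linarith
      have hlk : 0 < Real.log k := Real.log_pos hk1R
      have hr1 : (0:ℝ) < r := by
        have hsk0 : 0 < Real.sqrt k := Real.sqrt_pos.mpr (by linarith)
        calc (0:ℝ) < Real.sqrt k/(16*Real.log k^2) := by positivity
          _ ≤ r := hr0
      push_cast
      exact div_pos (pow_pos hr1 2) (pow_pos hlk 3)
end

section
/- Let m ≥ 1 and s, t ≥ 3 be integers and let A ⊆ {0, 1, ..., 2^m − 1}. If A contains no δ-increasing set of order s and no δ-decreasing set of order t, then |A| ≤ C(s + t − 4, t − 2), where C(·,·) denotes the binomial coefficient. -/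
/-- `δ(u,v)`: the largest index `i` at which the binary expansions of `u` and `v` differ. -/
noncomputable def bitDelta (u v : ℕ) : ℕ := sSup {i : ℕ | u.testBit i ≠ v.testBit i}

/-- `A` contains a δ-increasing set of order `s`: elements `v₁ < v₂ < ⋯ < v_s` of `A` with
`δ(v₁,v₂) < δ(v₂,v₃) < ⋯ < δ(v_{s-1},v_s)`. -/
def HasDeltaIncreasing (A : Finset ℕ) (s : ℕ) : Prop :=
  ∃ v : ℕ → ℕ, (∀ i, i < s → v i ∈ A) ∧ (∀ i, i + 1 < s → v i < v (i + 1)) ∧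
    ∀ i, i + 2 < s → bitDelta (v i) (v (i + 1)) < bitDelta (v (i + 1)) (v (i + 2))

/-- `A` contains a δ-decreasing set of order `t`: elements `v₁ < v₂ < ⋯ < v_t` of `A` with
`δ(v₁,v₂) > δ(v₂,v₃) > ⋯ > δ(v_{t-1},v_t)`. -/
def HasDeltaDecreasing (A : Finset ℕ) (t : ℕ) : Prop :=
  ∃ v : ℕ → ℕ, (∀ i, i < t → v i ∈ A) ∧ (∀ i, i + 1 < t → v i < v (i + 1)) ∧
    ∀ i, i + 2 < t → bitDelta (v (i + 1)) (v (i + 2)) < bitDelta (v i) (v (i + 1))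

/- ### Auxiliary lemmas -/

lemma testBit_false_of_lt {m j x : ℕ} (h : x < 2 ^ m) (hj : m ≤ j) : x.testBit j = false :=
  Nat.testBit_eq_false_of_lt (lt_of_lt_of_le h (Nat.pow_le_pow_right (by norm_num) hj))

lemma testBit_true_of_mem {n x : ℕ} (h1 : 2 ^ n ≤ x) (h2 : x < 2 ^ (n + 1)) :
    x.testBit n = true := by
  rw [Nat.testBit_eq_decide_div_mod_eq]
  have hdiv : x / 2 ^ n = 1 := by
    apply Nat.div_eq_of_lt_le (by omega)
    rw [pow_succ] at h2; omega
  simp [hdiv]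

lemma bitDelta_lt_of {n u v : ℕ} (huv : u ≠ v)
    (h : ∀ i, n ≤ i → u.testBit i = v.testBit i) : bitDelta u v < n := by
  have hne : {i : ℕ | u.testBit i ≠ v.testBit i}.Nonempty := by
    by_contra hc
    apply huv
    apply Nat.eq_of_testBit_eq
    intro i
    by_contra hi
    exact hc ⟨i, hi⟩
  have hbd : ∀ b ∈ {i : ℕ | u.testBit i ≠ v.testBit i}, b < n := by
    intro b hb
    by_contra hbn
    exact hb (h b (le_of_not_gt hbn))
  have hmem := Nat.sSup_mem hne ⟨n, fun b hb => le_of_lt (hbd b hb)⟩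
  exact hbd _ hmem

lemma bitDelta_eq_of {n u v : ℕ} (hd : u.testBit n ≠ v.testBit n)
    (h : ∀ i, n < i → u.testBit i = v.testBit i) : bitDelta u v = n := by
  have hbd : ∀ b ∈ {i : ℕ | u.testBit i ≠ v.testBit i}, b ≤ n := by
    intro b hb
    by_contra hbn
    exact hb (h b (lt_of_not_ge hbn))
  apply le_antisymm
  · exact csSup_le ⟨n, hd⟩ hbd
  · exact le_csSup ⟨n, hbd⟩ hd

lemma bitDelta_add {n u v : ℕ} (hu : u < 2 ^ n) (hv : v < 2 ^ n) :
    bitDelta (u + 2 ^ n) (v + 2 ^ n) = bitDelta u v := by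
  unfold bitDelta
  congr 1
  ext i
  simp only [Set.mem_setOf_eq]
  rcases lt_trichotomy i n with h | h | h
  · rw [add_comm u, add_comm v, Nat.testBit_two_pow_add_gt h, Nat.testBit_two_pow_add_gt h]
  · subst h
    have h1 : (u + 2 ^ i).testBit i = true :=
      testBit_true_of_mem (Nat.le_add_left _ _) (by rw [pow_succ]; omega)
    have h2 : (v + 2 ^ i).testBit i = true :=
      testBit_true_of_mem (Nat.le_add_left _ _) (by rw [pow_succ]; omega)
    simp [h1, h2, Nat.testBit_eq_false_of_lt hu, Nat.testBit_eq_false_of_lt hv]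
  · have h1 : (u + 2 ^ n).testBit i = false :=
      testBit_false_of_lt (show u + 2 ^ n < 2 ^ (n + 1) by rw [pow_succ]; omega) h
    have h2 : (v + 2 ^ n).testBit i = false :=
      testBit_false_of_lt (show v + 2 ^ n < 2 ^ (n + 1) by rw [pow_succ]; omega) h
    have h3 : u.testBit i = false := testBit_false_of_lt hu (by omega)
    have h4 : v.testBit i = false := testBit_false_of_lt hv (by omega)
    simp [h1, h2, h3, h4]

lemma inc_mono {A B : Finset ℕ} {s : ℕ} (h : A ⊆ B) :
    HasDeltaIncreasing A s → HasDeltaIncreasing B s :=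
  fun ⟨v, h1, h2, h3⟩ => ⟨v, fun i hi => h (h1 i hi), h2, h3⟩

lemma dec_mono {A B : Finset ℕ} {t : ℕ} (h : A ⊆ B) :
    HasDeltaDecreasing A t → HasDeltaDecreasing B t :=
  fun ⟨v, h1, h2, h3⟩ => ⟨v, fun i hi => h (h1 i hi), h2, h3⟩

lemma two_elems_inc {A : Finset ℕ} {a b : ℕ} (ha : a ∈ A) (hb : b ∈ A) (hab : a < b) :
    HasDeltaIncreasing A 2 := by
  refine ⟨fun i => if i = 0 then a else b, ?_, ?_, ?_⟩
  · intro i hi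
    by_cases h : i = 0 <;> simp [h, ha, hb]
  · intro i hi
    have : i = 0 := by omega
    simp [this, hab]
  · intro i hi; omega

lemma two_elems_dec {A : Finset ℕ} {a b : ℕ} (ha : a ∈ A) (hb : b ∈ A) (hab : a < b) :
    HasDeltaDecreasing A 2 := by
  refine ⟨fun i => if i = 0 then a else b, ?_, ?_, ?_⟩
  · intro i hi
    by_cases h : i = 0 <;> simp [h, ha, hb]
  · intro i hi
    have : i = 0 := by omega
    simp [this, hab]
  · intro i hi; omega

lemma card_le_one_of_not_inc_two {A : Finset ℕ} (h : ¬ HasDeltaIncreasing A 2) :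
    A.card ≤ 1 := by
  by_contra hc
  push_neg at hc
  rw [Finset.one_lt_card] at hc
  obtain ⟨a, ha, b, hb, hab⟩ := hc
  rcases hab.lt_or_gt with hlt | hlt
  · exact h (two_elems_inc ha hb hlt)
  · exact h (two_elems_inc hb ha hlt)

lemma card_le_one_of_not_dec_two {A : Finset ℕ} (h : ¬ HasDeltaDecreasing A 2) :
    A.card ≤ 1 := by
  by_contra hc
  push_neg at hc
  rw [Finset.one_lt_card] at hc
  obtain ⟨a, ha, b, hb, hab⟩ := hc
  rcases hab.lt_or_gt with hlt | hlt
  · exact h (two_elems_dec ha hb hlt)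
  · exact h (two_elems_dec hb ha hlt)

lemma inc_shift {A : Finset ℕ} {m s : ℕ} (hall : ∀ x ∈ A, 2 ^ m ≤ x ∧ x < 2 ^ (m + 1))
    (h : HasDeltaIncreasing (A.image (fun x => x - 2 ^ m)) s) : HasDeltaIncreasing A s := by
  obtain ⟨v, h1, h2, h3⟩ := h
  have mem : ∀ j, j < s → v j < 2 ^ m ∧ v j + 2 ^ m ∈ A := by
    intro j hj
    obtain ⟨a, ha, hav⟩ := Finset.mem_image.1 (h1 j hj)
    have h' := hall a ha
    have : a = v j + 2 ^ m := by omega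
    constructor
    · omega
    · rwa [← this]
  refine ⟨fun i => v i + 2 ^ m, ?_, ?_, ?_⟩
  · intro i hi; exact (mem i hi).2
  · intro i hi
    show v i + 2 ^ m < v (i + 1) + 2 ^ m
    have := h2 i hi; omega
  · intro i hi
    show bitDelta (v i + 2 ^ m) (v (i + 1) + 2 ^ m) <
      bitDelta (v (i + 1) + 2 ^ m) (v (i + 2) + 2 ^ m)
    rw [bitDelta_add (mem i (by omega)).1 (mem (i + 1) (by omega)).1,
        bitDelta_add (mem (i + 1) (by omega)).1 (mem (i + 2) (by omega)).1]
    exact h3 i hi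

lemma dec_shift {A : Finset ℕ} {m t : ℕ} (hall : ∀ x ∈ A, 2 ^ m ≤ x ∧ x < 2 ^ (m + 1))
    (h : HasDeltaDecreasing (A.image (fun x => x - 2 ^ m)) t) : HasDeltaDecreasing A t := by
  obtain ⟨v, h1, h2, h3⟩ := h
  have mem : ∀ j, j < t → v j < 2 ^ m ∧ v j + 2 ^ m ∈ A := by
    intro j hj
    obtain ⟨a, ha, hav⟩ := Finset.mem_image.1 (h1 j hj)
    have h' := hall a ha
    have : a = v j + 2 ^ m := by omega
    constructor
    · omega
    · rwa [← this]
  refine ⟨fun i => v i + 2 ^ m, ?_, ?_, ?_⟩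
  · intro i hi; exact (mem i hi).2
  · intro i hi
    show v i + 2 ^ m < v (i + 1) + 2 ^ m
    have := h2 i hi; omega
  · intro i hi
    show bitDelta (v (i + 1) + 2 ^ m) (v (i + 2) + 2 ^ m) <
      bitDelta (v i + 2 ^ m) (v (i + 1) + 2 ^ m)
    rw [bitDelta_add (mem i (by omega)).1 (mem (i + 1) (by omega)).1,
        bitDelta_add (mem (i + 1) (by omega)).1 (mem (i + 2) (by omega)).1]
    exact h3 i hi

lemma inc_extend {B : Finset ℕ} {m s : ℕ} (hs : 2 ≤ s)
    (hB : ∀ x ∈ B, x < 2 ^ m) {y : ℕ} (hy1 : 2 ^ m ≤ y) (hy2 : y < 2 ^ (m + 1))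
    (h : HasDeltaIncreasing B s) : HasDeltaIncreasing (insert y B) (s + 1) := by
  obtain ⟨v, h1, h2, h3⟩ := h
  refine ⟨fun i => if i < s then v i else y, ?_, ?_, ?_⟩
  · intro i hi
    by_cases h' : i < s
    · simp only [if_pos h']; exact Finset.mem_insert_of_mem (h1 i h')
    · simp only [if_neg h']; exact Finset.mem_insert_self y B
  · intro i hi
    by_cases h' : i + 1 < s
    · simp only [if_pos (by omega : i < s), if_pos h']; exact h2 i h'
    · simp only [if_pos (by omega : i < s), if_neg h']
      exact lt_of_lt_of_le (hB _ (h1 i (by omega))) hy1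
  · intro i hi
    by_cases h' : i + 2 < s
    · simp only [if_pos (by omega : i < s), if_pos (by omega : i + 1 < s), if_pos h']
      exact h3 i h'
    · simp only [if_pos (by omega : i < s), if_pos (by omega : i + 1 < s), if_neg h']
      have hvi : v i < 2 ^ m := hB _ (h1 i (by omega))
      have hvi1 : v (i + 1) < 2 ^ m := hB _ (h1 (i + 1) (by omega))
      have hne : v i ≠ v (i + 1) := Nat.ne_of_lt (h2 i (by omega))
      have hlt : bitDelta (v i) (v (i + 1)) < m :=
        bitDelta_lt_of hne (fun j hj => by
          rw [testBit_false_of_lt hvi hj, testBit_false_of_lt hvi1 hj])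
      have heq : bitDelta (v (i + 1)) y = m := by
        apply bitDelta_eq_of
        · rw [testBit_false_of_lt hvi1 (le_refl m), testBit_true_of_mem hy1 hy2]
          simp
        · intro j hj
          rw [testBit_false_of_lt hvi1 (by omega), testBit_false_of_lt hy2 (by omega)]
      rw [heq]
      exact hlt

lemma dec_prepend {B : Finset ℕ} {m t : ℕ} (ht : 2 ≤ t)
    (hB : ∀ y ∈ B, 2 ^ m ≤ y ∧ y < 2 ^ (m + 1)) {x : ℕ} (hx : x < 2 ^ m)
    (h : HasDeltaDecreasing B t) : HasDeltaDecreasing (insert x B) (t + 1) := by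
  obtain ⟨v, h1, h2, h3⟩ := h
  refine ⟨fun i => if i = 0 then x else v (i - 1), ?_, ?_, ?_⟩
  · intro i hi
    by_cases h' : i = 0
    · simp only [if_pos h']; exact Finset.mem_insert_self x B
    · simp only [if_neg h']; exact Finset.mem_insert_of_mem (h1 (i - 1) (by omega))
  · intro i hi
    by_cases h' : i = 0
    · subst h'
      show x < v 0
      have := hB _ (h1 0 (by omega))
      omega
    · simp only [if_neg h', if_neg (by omega : ¬ (i + 1 = 0))]
      have := h2 (i - 1) (by omega)
      have e : i - 1 + 1 = i := by omega
      rw [e] at this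
      have e2 : i + 1 - 1 = i := by omega
      rw [e2]
      exact this
  · intro i hi
    by_cases h' : i = 0
    · subst h'
      show bitDelta (v 0) (v 1) < bitDelta x (v 0)
      have hv0 := hB _ (h1 0 (by omega))
      have hv1 := hB _ (h1 1 (by omega))
      have hne : v 0 ≠ v 1 := Nat.ne_of_lt (h2 0 (by omega))
      have hlt : bitDelta (v 0) (v 1) < m := by
        apply bitDelta_lt_of hne
        intro j hj
        rcases eq_or_lt_of_le hj with hj' | hj'
        · rw [← hj', testBit_true_of_mem hv0.1 hv0.2, testBit_true_of_mem hv1.1 hv1.2]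
        · rw [testBit_false_of_lt hv0.2 hj', testBit_false_of_lt hv1.2 hj']
      have heq : bitDelta x (v 0) = m := by
        apply bitDelta_eq_of
        · rw [testBit_false_of_lt hx (le_refl m), testBit_true_of_mem hv0.1 hv0.2]
          simp
        · intro j hj
          rw [testBit_false_of_lt hx (by omega), testBit_false_of_lt hv0.2 (by omega)]
      rw [heq]
      exact hlt
    · simp only [if_neg h', if_neg (by omega : ¬ (i + 1 = 0)),
        if_neg (by omega : ¬ (i + 2 = 0))]
      have := h3 (i - 1) (by omega)
      have e1 : i - 1 + 1 = i := by omega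
      have e2 : i - 1 + 2 = i + 1 := by omega
      rw [e1, e2] at this
      have e3 : i + 1 - 1 = i := by omega
      have e4 : i + 2 - 1 = i + 1 := by omega
      rw [e3, e4]
      exact this

lemma aux_card_bound : ∀ m s t : ℕ, 2 ≤ s → 2 ≤ t → ∀ A : Finset ℕ,
    A ⊆ Finset.range (2 ^ m) → ¬ HasDeltaIncreasing A s → ¬ HasDeltaDecreasing A t →
    A.card ≤ Nat.choose (s + t - 4) (t - 2) := by
  intro m
  induction m with
  | zero =>
    intro s t hs ht A hA _ _
    have h1 : A.card ≤ 1 := by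
      have := Finset.card_le_card hA
      simpa using this
    have h2 : 0 < Nat.choose (s + t - 4) (t - 2) := Nat.choose_pos (by omega)
    omega
  | succ m ih =>
    intro s t hs ht A hA hinc hdec
    have hcpos : 0 < Nat.choose (s + t - 4) (t - 2) := Nat.choose_pos (by omega)
    by_cases hs2 : s = 2
    · subst hs2
      have := card_le_one_of_not_inc_two hinc
      omega
    by_cases ht2 : t = 2
    · subst ht2
      have := card_le_one_of_not_dec_two hdec
      omega
    have hs3 : 3 ≤ s := by omega
    have ht3 : 3 ≤ t := by omega
    by_cases hup : ∀ x ∈ A, x < 2 ^ m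
    · exact ih s t hs ht A (fun x hx => Finset.mem_range.2 (hup x hx)) hinc hdec
    · by_cases hlo : ∀ x ∈ A, 2 ^ m ≤ x
      · -- all elements in the upper half: shift down
        have hall : ∀ x ∈ A, 2 ^ m ≤ x ∧ x < 2 ^ (m + 1) :=
          fun x hx => ⟨hlo x hx, Finset.mem_range.1 (hA hx)⟩
        set A' := A.image (fun x => x - 2 ^ m) with hA'
        have hcard : A'.card = A.card := Finset.card_image_of_injOn (fun a ha b hb hab => by
          have := hall a ha; have := hall b hb
          have hab' : a - 2 ^ m = b - 2 ^ m := hab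
          omega)
        have hsub : A' ⊆ Finset.range (2 ^ m) := by
          intro z hz
          obtain ⟨a, ha, rfl⟩ := Finset.mem_image.1 hz
          have h' := hall a ha
          rw [pow_succ] at h'
          exact Finset.mem_range.2 (by omega)
        have := ih s t hs ht A' hsub
          (fun h => hinc (inc_shift hall h)) (fun h => hdec (dec_shift hall h))
        omega
      · -- elements in both halves
        push_neg at hup hlo
        obtain ⟨y, hyA, hy⟩ := hup
        obtain ⟨x, hxA, hx⟩ := hlo
        have hy1 : 2 ^ m ≤ y := by omega
        have hy2 : y < 2 ^ (m + 1) := Finset.mem_range.1 (hA hyA)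
        set B0 := A.filter (fun z => z < 2 ^ m) with hB0def
        set B1 := A.filter (fun z => ¬ z < 2 ^ m) with hB1def
        have hsum : B0.card + B1.card = A.card :=
          Finset.card_filter_add_card_filter_not _
        have hB0mem : ∀ z ∈ B0, z < 2 ^ m := fun z hz => (Finset.mem_filter.1 hz).2
        have hB0A : B0 ⊆ A := Finset.filter_subset _ _
        have hB1A : B1 ⊆ A := Finset.filter_subset _ _
        have hall1 : ∀ z ∈ B1, 2 ^ m ≤ z ∧ z < 2 ^ (m + 1) := by
          intro z hz
          have h' := Finset.mem_filter.1 hz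
          exact ⟨by omega, Finset.mem_range.1 (hA h'.1)⟩
        -- Bound for B0
        have hB0sub : B0 ⊆ Finset.range (2 ^ m) :=
          fun z hz => Finset.mem_range.2 (hB0mem z hz)
        have hB0inc : ¬ HasDeltaIncreasing B0 (s - 1) := by
          intro h
          apply hinc
          have h' := inc_extend (by omega) hB0mem hy1 hy2 h
          rw [show s - 1 + 1 = s by omega] at h'
          refine inc_mono ?_ h'
          intro z hz
          rcases Finset.mem_insert.1 hz with rfl | hz'
          · exact hyA
          · exact hB0A hz'
        have hB0dec : ¬ HasDeltaDecreasing B0 t := fun h => hdec (dec_mono hB0A h)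
        have c0 := ih (s - 1) t (by omega) ht B0 hB0sub hB0inc hB0dec
        -- Bound for B1 (shifted)
        set B1' := B1.image (fun z => z - 2 ^ m) with hB1'def
        have hc1 : B1'.card = B1.card := Finset.card_image_of_injOn (fun a ha b hb hab => by
          have := hall1 a ha; have := hall1 b hb
          have hab' : a - 2 ^ m = b - 2 ^ m := hab
          omega)
        have hB1'sub : B1' ⊆ Finset.range (2 ^ m) := by
          intro z hz
          obtain ⟨a, ha, rfl⟩ := Finset.mem_image.1 hz
          have h' := hall1 a ha
          rw [pow_succ] at h'
          exact Finset.mem_range.2 (by omega)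
        have hB1inc : ¬ HasDeltaIncreasing B1' s :=
          fun h => hinc (inc_mono hB1A (inc_shift hall1 h))
        have hB1dec : ¬ HasDeltaDecreasing B1' (t - 1) := by
          intro h
          apply hdec
          have h2 := dec_shift hall1 h
          have h3 := dec_prepend (by omega) hall1 hx h2
          rw [show t - 1 + 1 = t by omega] at h3
          refine dec_mono ?_ h3
          intro z hz
          rcases Finset.mem_insert.1 hz with rfl | hz'
          · exact hxA
          · exact hB1A hz'
        have c1 := ih s (t - 1) hs (by omega) B1' hB1'sub hB1inc hB1dec
        -- Combine via Pascal's rule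
        have e3 : s - 1 + t - 4 = s + t - 5 := by omega
        have e4 : s + (t - 1) - 4 = s + t - 5 := by omega
        have e5 : t - 1 - 2 = t - 3 := by omega
        rw [e3] at c0
        rw [e4, e5] at c1
        have pascal : Nat.choose (s + t - 4) (t - 2) =
            Nat.choose (s + t - 5) (t - 3) + Nat.choose (s + t - 5) (t - 2) := by
          rw [show s + t - 4 = (s + t - 5) + 1 by omega, show t - 2 = (t - 3) + 1 by omega]
          rw [Nat.choose_succ_succ]
        omega

/-- If `A ⊆ {0, …, 2^m − 1}` contains no δ-increasing set of order `s` and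
no δ-decreasing set of order `t`, then `|A| ≤ C(s + t − 4, t − 2)`. -/
theorem card_le_of_no_delta_monotone (m s t : ℕ) (hm : 1 ≤ m) (hs : 3 ≤ s) (ht : 3 ≤ t)
    (A : Finset ℕ) (hA : A ⊆ Finset.range (2 ^ m))
    (hinc : ¬ HasDeltaIncreasing A s) (hdec : ¬ HasDeltaDecreasing A t) :
    A.card ≤ Nat.choose (s + t - 4) (t - 2) := by
  exact aux_card_bound m s t (by omega) (by omega) A hA hinc hdec
end

section
/- Let m, n ≥ 1 be integers and let G be a simple graph on the vertex set {0, 1, ..., m−1} with no independent set of size n. Color each 3-element subset {v_1, v_2, v_3} of {0, 1, ..., 2^m − 1} with v_1 < v_2 < v_3 red if δ(v_1,v_2) > δ(v_2,v_3) and {δ(v_1,v_2), δ(v_2,v_3)} is an edge of G, and blue otherwise. Then every subset A ⊆ {0,...,2^m − 1} all of whose 3-element subsets are colored blue satisfies |A| ≤ C(m + n − 1, n − 1), where C(·,·) denotes the binomial coefficient. -/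
lemma diff_nonempty {u v : ℕ} (h : u ≠ v) : {i : ℕ | u.testBit i ≠ v.testBit i}.Nonempty := by
  by_contra hc
  rw [Set.not_nonempty_iff_eq_empty] at hc
  exact h (Nat.eq_of_testBit_eq fun i => by
    by_contra hne
    exact (Set.eq_empty_iff_forall_notMem.1 hc i) hne)

lemma tb_false {u k i : ℕ} (hu : u < 2 ^ k) (hi : k ≤ i) : u.testBit i = false :=
  Nat.testBit_lt_two_pow (lt_of_lt_of_le hu (Nat.pow_le_pow_right (by norm_num) hi))

lemma diff_bdd {u v k : ℕ} (hu : u < 2 ^ k) (hv : v < 2 ^ k) :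
    ∀ i ∈ {i : ℕ | u.testBit i ≠ v.testBit i}, i < k := by
  intro i hi
  by_contra hk
  push_neg at hk
  exact hi (by rw [tb_false hu hk, tb_false hv hk])

lemma bitDelta_lt {u v k : ℕ} (h : u ≠ v) (hu : u < 2 ^ k) (hv : v < 2 ^ k) :
    bitDelta u v < k :=
  diff_bdd hu hv _ (Nat.sSup_mem (diff_nonempty h)
    ⟨k, fun i hi => le_of_lt (diff_bdd hu hv i hi)⟩)

lemma testBit_of_mem_Ico {u m : ℕ} (h1 : 2 ^ m ≤ u) (h2 : u < 2 ^ (m + 1)) :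
    u.testBit m = true := by
  rw [Nat.testBit_eq_decide_div_mod_eq]
  have hpos : 0 < 2 ^ m := Nat.pow_pos (by norm_num)
  have h1' : 1 ≤ u / 2 ^ m := (Nat.one_le_div_iff hpos).2 h1
  have h2' : u / 2 ^ m < 2 := (Nat.div_lt_iff_lt_mul hpos).2 (by rw [Nat.pow_succ] at h2; omega)
  have : u / 2 ^ m = 1 := by omega
  simp [this]

lemma bitDelta_split {u v m : ℕ} (hu : u < 2 ^ m) (hv1 : 2 ^ m ≤ v) (hv2 : v < 2 ^ (m + 1)) :
    bitDelta u v = m := by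
  have hmem : m ∈ {i : ℕ | u.testBit i ≠ v.testBit i} := by
    simp only [Set.mem_setOf_eq, tb_false hu (le_refl m), testBit_of_mem_Ico hv1 hv2]
    simp
  apply le_antisymm
  · refine csSup_le ⟨m, hmem⟩ fun i hi => ?_
    by_contra hk
    push_neg at hk
    exact hi (by rw [tb_false (lt_of_lt_of_le hu (Nat.pow_le_pow_right (by norm_num) (le_of_lt hk))) (le_refl i),
      tb_false hv2 hk])
  · exact le_csSup ⟨m, fun i hi => by
      by_contra hk
      push_neg at hk
      have hu' : u < 2 ^ (m+1) := lt_of_lt_of_le hu (Nat.pow_le_pow_right (by norm_num) (by omega))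
      exact hi (by rw [tb_false hu' hk, tb_false hv2 hk])⟩ hmem

lemma sub_testBit {u m i : ℕ} (h1 : 2 ^ m ≤ u) (h2 : u < 2 ^ (m + 1)) :
    (u - 2 ^ m).testBit i = (decide (i < m) && u.testBit i) := by
  have h3 : 2 ^ (m+1) = 2 ^ m + 2 ^ m := by rw [Nat.pow_succ]; omega
  have hmod : u % 2 ^ m = u - 2 ^ m := by
    rw [Nat.mod_eq_sub_mod h1, Nat.mod_eq_of_lt (by omega)]
  rw [← hmod, Nat.testBit_mod_two_pow]

lemma bitDelta_shift {u v m : ℕ} (hu1 : 2 ^ m ≤ u) (hu2 : u < 2 ^ (m + 1))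
    (hv1 : 2 ^ m ≤ v) (hv2 : v < 2 ^ (m + 1)) :
    bitDelta (u - 2 ^ m) (v - 2 ^ m) = bitDelta u v := by
  unfold bitDelta
  congr 1
  ext i
  simp only [Set.mem_setOf_eq, sub_testBit hu1 hu2, sub_testBit hv1 hv2]
  rcases lt_or_ge i m with h | h
  · simp [h]
  · rcases eq_or_lt_of_le h with rfl | h'
    · simp [testBit_of_mem_Ico hu1 hu2, testBit_of_mem_Ico hv1 hv2]
    · simp [Nat.not_lt.2 h, tb_false hu2 h', tb_false hv2 h']
theorem aux_stepping (m : ℕ) : ∀ (n : ℕ) (G : SimpleGraph ℕ),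
    (∀ s : Finset ℕ, s ⊆ Finset.range m → s.card = n + 1 → ∃ u ∈ s, ∃ v ∈ s, G.Adj u v) →
    ∀ A : Finset ℕ, A ⊆ Finset.range (2 ^ m) →
    (∀ v₁ ∈ A, ∀ v₂ ∈ A, ∀ v₃ ∈ A, v₁ < v₂ → v₂ < v₃ →
      ¬ (bitDelta v₂ v₃ < bitDelta v₁ v₂ ∧ G.Adj (bitDelta v₁ v₂) (bitDelta v₂ v₃))) →
    A.card ≤ (m + n).choose n := by
  induction m with
  | zero =>
    intro n G hind A hA hblue
    have hsub : A ⊆ {0} := by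
      intro a ha
      have := hA ha
      simp only [Finset.mem_range, pow_zero] at this
      simp [Nat.lt_one_iff.1 this]
    calc A.card ≤ ({0} : Finset ℕ).card := Finset.card_le_card hsub
      _ = 1 := rfl
      _ ≤ (0 + n).choose n := by rw [Nat.zero_add, Nat.choose_self]
  | succ m IH =>
    intro n G hind A hA hblue
    cases n with
    | zero =>
      exfalso
      obtain ⟨u, hu, v, hv, hadj⟩ := hind {m}
        (by simp [Finset.singleton_subset_iff, Finset.mem_range]) (by simp)
      simp only [Finset.mem_singleton] at hu hv
      subst hu; subst hv
      exact G.loopless.irrefl _ hadj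
    | succ n =>
      classical
      have hP2 : 2 ^ (m + 1) = 2 ^ m + 2 ^ m := by rw [Nat.pow_succ]; omega
      set A₀ := A.filter (fun x => x < 2 ^ m) with hA₀def
      set A₁ := A.filter (fun x => ¬ x < 2 ^ m) with hA₁def
      have hmemA₁ : ∀ x ∈ A₁, x ∈ A ∧ 2 ^ m ≤ x ∧ x < 2 ^ (m + 1) := by
        intro x hx
        rw [hA₁def, Finset.mem_filter] at hx
        refine ⟨hx.1, by omega, ?_⟩
        have := hA hx.1; rwa [Finset.mem_range] at this
      have hmemA₀ : ∀ x ∈ A₀, x ∈ A ∧ x < 2 ^ m := by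
        intro x hx
        rw [hA₀def, Finset.mem_filter] at hx
        exact ⟨hx.1, hx.2⟩
      set B := A₁.image (fun x => x - 2 ^ m) with hBdef
      have hcardB : B.card = A₁.card := Finset.card_image_of_injOn (by
        intro x hx y hy hxy
        have h1 := hmemA₁ x hx
        have h2 := hmemA₁ y hy
        simp only at hxy
        omega)
      have hBsub : B ⊆ Finset.range (2 ^ m) := by
        intro b hb
        rw [hBdef, Finset.mem_image] at hb
        obtain ⟨x, hx, rfl⟩ := hb
        have := hmemA₁ x hx
        rw [Finset.mem_range]; omega
      have hBpre : ∀ b ∈ B, ∃ x ∈ A₁, x - 2 ^ m = b := by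
        intro b hb
        rw [hBdef, Finset.mem_image] at hb
        exact hb
      have hdelta : ∀ x ∈ A₁, ∀ y ∈ A₁, bitDelta (x - 2 ^ m) (y - 2 ^ m) = bitDelta x y := by
        intro x hx y hy
        have h1 := hmemA₁ x hx
        have h2 := hmemA₁ y hy
        exact bitDelta_shift h1.2.1 h1.2.2 h2.2.1 h2.2.2
      have hkey : ∀ x ∈ A₁, ∀ y ∈ A₁, x < y →
          bitDelta x y < m ∧ ¬ G.Adj m (bitDelta x y) → True := fun _ _ _ _ _ _ => trivial
      -- main case split: is A₀ empty?
      rcases Finset.eq_empty_or_nonempty A₀ with h0 | h0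
      · -- A₀ empty : A = A₁, apply IH directly to B
        have hA1eq : A₁ = A := by
          rw [hA₁def]
          apply Finset.filter_true_of_mem
          intro x hxA
          by_contra hx
          have : x ∈ A₀ := by rw [hA₀def, Finset.mem_filter]; exact ⟨hxA, hx⟩
          rw [h0] at this
          exact absurd this (Finset.notMem_empty x)
        have hblueB : ∀ b₁ ∈ B, ∀ b₂ ∈ B, ∀ b₃ ∈ B, b₁ < b₂ → b₂ < b₃ →
            ¬ (bitDelta b₂ b₃ < bitDelta b₁ b₂ ∧ G.Adj (bitDelta b₁ b₂) (bitDelta b₂ b₃)) := by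
          intro b₁ hb₁ b₂ hb₂ b₃ hb₃ h12 h23
          obtain ⟨x₁, hx₁, rfl⟩ := hBpre b₁ hb₁
          obtain ⟨x₂, hx₂, rfl⟩ := hBpre b₂ hb₂
          obtain ⟨x₃, hx₃, rfl⟩ := hBpre b₃ hb₃
          have m₁ := hmemA₁ x₁ hx₁
          have m₂ := hmemA₁ x₂ hx₂
          have m₃ := hmemA₁ x₃ hx₃
          rw [hdelta x₁ hx₁ x₂ hx₂, hdelta x₂ hx₂ x₃ hx₃]
          exact hblue x₁ m₁.1 x₂ m₂.1 x₃ m₃.1 (by omega) (by omega)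
        have hindm : ∀ s : Finset ℕ, s ⊆ Finset.range m → s.card = (n + 1) + 1 →
            ∃ u ∈ s, ∃ v ∈ s, G.Adj u v := fun s hs hc =>
          hind s (hs.trans (Finset.range_subset_range.2 (by omega))) hc
        have hBbound := IH (n + 1) G hindm B hBsub hblueB
        calc A.card = A₁.card := by rw [hA1eq]
          _ = B.card := hcardB.symm
          _ ≤ (m + (n + 1)).choose (n + 1) := hBbound
          _ ≤ (m + 1 + (n + 1)).choose (n + 1) := Nat.choose_le_choose _ (by omega)
      · -- A₀ nonempty
        obtain ⟨u₀, hu₀⟩ := h0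
        have hu₀' := hmemA₀ u₀ hu₀
        -- key: deltas inside A₁ are < m and not G-adjacent to m
        have hkey : ∀ x ∈ A₁, ∀ y ∈ A₁, x < y →
            bitDelta x y < m ∧ ¬ G.Adj m (bitDelta x y) := by
          intro x hx y hy hxy
          have m₁ := hmemA₁ x hx
          have m₂ := hmemA₁ y hy
          have hlt : bitDelta x y < m := by
            rw [← hdelta x hx y hy]
            exact bitDelta_lt (by omega) (by omega) (by omega)
          refine ⟨hlt, ?_⟩
          have hsplit : bitDelta u₀ x = m := bitDelta_split hu₀'.2 m₁.2.1 m₁.2.2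
          have := hblue u₀ hu₀'.1 x m₁.1 y m₂.1 (by omega) hxy
          rw [hsplit] at this
          intro hadj
          exact this ⟨hlt, hadj⟩
        -- bound B.card ≤ (m+n).choose n
        have hBbound : B.card ≤ (m + n).choose n := by
          cases n with
          | zero =>
            -- show B.card ≤ 1
            simp only [Nat.add_zero, Nat.choose_zero_right]
            by_contra hc
            rw [Nat.not_le] at hc
            obtain ⟨b, hb⟩ := (Finset.card_pos (s := B)).1 (by omega)
            obtain ⟨b', hb', hbb'⟩ := Finset.exists_mem_ne (s := B) hc b
            obtain ⟨x, hx, rfl⟩ := hBpre b hb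
            obtain ⟨y, hy, rfl⟩ := hBpre b' hb'
            have m₁ := hmemA₁ x hx
            have m₂ := hmemA₁ y hy
            have hxy : x ≠ y := by omega
            -- wlog x < y
            have hmain : ∀ x ∈ A₁, ∀ y ∈ A₁, x < y → False := by
              intro x hx y hy hlt
              obtain ⟨hdlt, hnadj⟩ := hkey x hx y hy hlt
              obtain ⟨u, hu, v, hv, hadj⟩ := hind {bitDelta x y, m}
                (by
                  intro z hz
                  simp only [Finset.mem_insert, Finset.mem_singleton] at hz
                  rw [Finset.mem_range]
                  rcases hz with rfl | rfl <;> omega)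
                (by rw [Finset.card_insert_of_notMem (by simp; omega)]; simp)
              have huv : u ≠ v := G.ne_of_adj hadj
              simp only [Finset.mem_insert, Finset.mem_singleton] at hu hv
              rcases hu with rfl | rfl <;> rcases hv with rfl | rfl
              · exact huv rfl
              · exact hnadj hadj.symm
              · exact hnadj hadj
              · exact huv rfl
            rcases lt_or_gt_of_ne hxy with h | h
            · exact hmain x hx y hy h
            · exact hmain y hy x hx h
          | succ n' =>
            -- use modified graph G'
            obtain ⟨G', hG'⟩ : ∃ G' : SimpleGraph ℕ, ∀ u v, G'.Adj u v ↔
                (u ≠ v ∧ (G.Adj u v ∨ G.Adj m u ∨ G.Adj m v)) := by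
              refine ⟨⟨fun u v => u ≠ v ∧ (G.Adj u v ∨ G.Adj m u ∨ G.Adj m v), ?_, ?_⟩,
                fun u v => Iff.rfl⟩
              · constructor
                rintro u v ⟨h1, h2⟩
                refine ⟨h1.symm, ?_⟩
                rcases h2 with h | h | h
                · exact Or.inl h.symm
                · exact Or.inr (Or.inr h)
                · exact Or.inr (Or.inl h)
              · constructor
                rintro u ⟨h1, -⟩
                exact h1 rfl
            have hind' : ∀ s : Finset ℕ, s ⊆ Finset.range m → s.card = (n' + 1) + 1 →
                ∃ u ∈ s, ∃ v ∈ s, G'.Adj u v := by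
              intro s hs hc
              have hms : m ∉ s := fun hms => by
                have := hs hms; rw [Finset.mem_range] at this; omega
              have hcard' : (insert m s).card = (n' + 1) + 1 + 1 :=
                by rw [Finset.card_insert_of_notMem hms, hc]
              obtain ⟨u, hu, v, hv, hadj⟩ := hind (insert m s)
                (by
                  intro z hz
                  rcases Finset.mem_insert.1 hz with rfl | hz
                  · rw [Finset.mem_range]; omega
                  · have := hs hz; rw [Finset.mem_range] at this ⊢; omega)
                hcard'
              have huv : u ≠ v := G.ne_of_adj hadj
              rcases Finset.mem_insert.1 hu with rfl | hu'
              · -- u = m, v ∈ s, G.Adj m v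
                have hv' : v ∈ s := by
                  rcases Finset.mem_insert.1 hv with rfl | hv'
                  · exact absurd rfl huv
                  · exact hv'
                obtain ⟨w, hw, hwv⟩ := Finset.exists_mem_ne (s := s) (by omega) v
                exact ⟨v, hv', w, hw, (hG' v w).2 ⟨hwv.symm, Or.inr (Or.inl hadj)⟩⟩
              · rcases Finset.mem_insert.1 hv with rfl | hv'
                · -- v = m, u ∈ s, G.Adj u m
                  obtain ⟨w, hw, hwu⟩ := Finset.exists_mem_ne (s := s) (by omega) u
                  exact ⟨u, hu', w, hw, (hG' u w).2 ⟨hwu.symm,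
                    Or.inr (Or.inl hadj.symm)⟩⟩
                · exact ⟨u, hu', v, hv', (hG' u v).2 ⟨huv, Or.inl hadj⟩⟩
            have hblue' : ∀ b₁ ∈ B, ∀ b₂ ∈ B, ∀ b₃ ∈ B, b₁ < b₂ → b₂ < b₃ →
                ¬ (bitDelta b₂ b₃ < bitDelta b₁ b₂ ∧
                  G'.Adj (bitDelta b₁ b₂) (bitDelta b₂ b₃)) := by
              intro b₁ hb₁ b₂ hb₂ b₃ hb₃ h12 h23
              obtain ⟨x₁, hx₁, rfl⟩ := hBpre b₁ hb₁
              obtain ⟨x₂, hx₂, rfl⟩ := hBpre b₂ hb₂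
              obtain ⟨x₃, hx₃, rfl⟩ := hBpre b₃ hb₃
              have m₁ := hmemA₁ x₁ hx₁
              have m₂ := hmemA₁ x₂ hx₂
              have m₃ := hmemA₁ x₃ hx₃
              have h12' : x₁ < x₂ := by omega
              have h23' : x₂ < x₃ := by omega
              rw [hdelta x₁ hx₁ x₂ hx₂, hdelta x₂ hx₂ x₃ hx₃]
              rintro ⟨hlt, hadj⟩
              rw [hG'] at hadj
              rcases hadj.2 with h | h | h
              · exact hblue x₁ m₁.1 x₂ m₂.1 x₃ m₃.1 h12' h23' ⟨hlt, h⟩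
              · exact (hkey x₁ hx₁ x₂ hx₂ h12').2 h
              · exact (hkey x₂ hx₂ x₃ hx₃ h23').2 h
            exact IH (n' + 1) G' hind' B hBsub hblue'
        -- bound A₀
        have hindm : ∀ s : Finset ℕ, s ⊆ Finset.range m → s.card = (n + 1) + 1 →
            ∃ u ∈ s, ∃ v ∈ s, G.Adj u v := fun s hs hc =>
          hind s (hs.trans (Finset.range_subset_range.2 (by omega))) hc
        have hA₀sub : A₀ ⊆ Finset.range (2 ^ m) := by
          intro x hx
          rw [Finset.mem_range]
          exact (hmemA₀ x hx).2
        have hblue₀ : ∀ v₁ ∈ A₀, ∀ v₂ ∈ A₀, ∀ v₃ ∈ A₀, v₁ < v₂ → v₂ < v₃ →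
            ¬ (bitDelta v₂ v₃ < bitDelta v₁ v₂ ∧ G.Adj (bitDelta v₁ v₂) (bitDelta v₂ v₃)) :=
          fun v₁ h₁ v₂ h₂ v₃ h₃ => hblue v₁ (hmemA₀ v₁ h₁).1 v₂ (hmemA₀ v₂ h₂).1
            v₃ (hmemA₀ v₃ h₃).1
        have hA₀bound := IH (n + 1) G hindm A₀ hA₀sub hblue₀
        have hsplitcard : A₀.card + A₁.card = A.card :=
          Finset.card_filter_add_card_filter_not _
        have hpascal : (m + 1 + (n + 1)).choose (n + 1) =
            (m + (n + 1)).choose n + (m + (n + 1)).choose (n + 1) := by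
          have : m + 1 + (n + 1) = (m + (n + 1)) + 1 := by omega
          rw [this, Nat.choose_succ_succ]
        have h1 : A₁.card ≤ (m + (n + 1)).choose n := by
          rw [← hcardB]
          exact hBbound.trans (Nat.choose_le_choose _ (by omega))
        omega

/-- Let `G` be a graph on `{0, …, m−1}` with no independent set of size `n`.
Color a triple `v₁ < v₂ < v₃` of `{0, …, 2^m − 1}` red iff `δ(v₁,v₂) > δ(v₂,v₃)` and
`{δ(v₁,v₂), δ(v₂,v₃)}` is an edge of `G`, blue otherwise. Then every `A ⊆ {0, …, 2^m − 1}`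
all of whose triples are blue satisfies `|A| ≤ C(m + n − 1, n − 1)`. -/
theorem stepping_up_no_blue_clique (m n : ℕ) (hm : 1 ≤ m) (hn : 1 ≤ n)
    (G : SimpleGraph ℕ)
    (hind : ∀ s : Finset ℕ, s ⊆ Finset.range m → s.card = n → ∃ u ∈ s, ∃ v ∈ s, G.Adj u v)
    (A : Finset ℕ) (hA : A ⊆ Finset.range (2 ^ m))
    (hblue : ∀ v₁ ∈ A, ∀ v₂ ∈ A, ∀ v₃ ∈ A, v₁ < v₂ → v₂ < v₃ →
      ¬ (bitDelta v₂ v₃ < bitDelta v₁ v₂ ∧ G.Adj (bitDelta v₁ v₂) (bitDelta v₂ v₃))) :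
    A.card ≤ Nat.choose (m + n - 1) (n - 1) := by
  obtain ⟨n', rfl⟩ : ∃ n', n = n' + 1 := ⟨n - 1, by omega⟩
  have h := aux_stepping m n' G (fun s hs hc => hind s hs hc) A hA hblue
  have h1 : m + (n' + 1) - 1 = m + n' := by omega
  have h2 : n' + 1 - 1 = n' := by omega
  rw [h1, h2]
  exact h
end

section
/- There is an absolute constant C > 0 such that for all integers n ≥ 1, p ≥ 2 and N ≥ 2^{C n log p} (log denotes the natural logarithm), the following holds: for every function f mapping the 2-element subsets of {1,...,N} to [p] = {1,...,p} and every function g : [p]^3 → {red, blue}, the coloring χ of the 3-element subsets of {1,...,N} defined by χ({i,j,k}) = g(f({i,j}), f({j,k}), f({i,k})) for i < j < k contains a monochromatic copy of K_{n,n,n}^(3). -/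
private lemma fiber_max_aux {α : Type*} [DecidableEq α] (p : ℕ) (hp : 1 ≤ p) (Y : Finset α)
    (φ : α → ℕ) (h : ∀ y ∈ Y, φ y ∈ Finset.Icc 1 p) :
    ∃ a ∈ Finset.Icc 1 p, Y.card ≤ p * (Y.filter fun y => φ y = a).card := by
  classical
  obtain ⟨a, ha, hmax⟩ := Finset.exists_max_image (Finset.Icc 1 p)
      (fun a => (Y.filter fun y => φ y = a).card) ⟨1, by simp [hp]⟩
  refine ⟨a, ha, ?_⟩
  calc Y.card = ∑ b ∈ Finset.Icc 1 p, (Y.filter fun y => φ y = b).card :=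
        Finset.card_eq_sum_card_fiberwise h
    _ ≤ (Finset.Icc 1 p).card * (Y.filter fun y => φ y = a).card := by
        simpa using Finset.sum_le_card_nsmul _ _ _ (fun b hb => hmax b hb)
    _ = p * (Y.filter fun y => φ y = a).card := by simp [Nat.card_Icc]

private lemma choose_bound_aux (p s : ℕ) :
    Nat.choose (2 * s * p) s ≤ (2 * p) ^ s * Nat.choose (2 * s) s := by
  have h1 : Nat.descFactorial (2*s*p) s ≤ (2*p)^s * s^s := by
    calc Nat.descFactorial (2*s*p) s ≤ (2*s*p)^s := Nat.descFactorial_le_pow _ _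
      _ = (2*p)^s * s^s := by rw [show 2*s*p = 2*p*s by ring, mul_pow]
  have h2 : s ^ s ≤ Nat.descFactorial (2*s) s := by
    calc s ^ s ≤ (s+1)^s := Nat.pow_le_pow_left (Nat.le_succ s) s
      _ = (2*s+1-s)^s := by congr 1; omega
      _ ≤ Nat.descFactorial (2*s) s := Nat.pow_sub_le_descFactorial _ _
  have h3 : s.factorial * Nat.choose (2*s*p) s ≤ s.factorial * ((2*p)^s * Nat.choose (2*s) s) := by
    calc s.factorial * Nat.choose (2*s*p) s = Nat.descFactorial (2*s*p) s :=
          (Nat.descFactorial_eq_factorial_mul_choose _ _).symm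
      _ ≤ (2*p)^s * s^s := h1
      _ ≤ (2*p)^s * Nat.descFactorial (2*s) s := Nat.mul_le_mul_left _ h2
      _ = (2*p)^s * (s.factorial * Nat.choose (2*s) s) := by
          rw [Nat.descFactorial_eq_factorial_mul_choose]
      _ = s.factorial * ((2*p)^s * Nat.choose (2*s) s) := by ring
  exact Nat.le_of_mul_le_mul_left h3 s.factorial_pos

private lemma grid_lemma (p s m : ℕ) (hp : 1 ≤ p) (hm : 1 ≤ m)
    (f : Finset ℕ → ℕ) (A B : Finset ℕ)
    (hfA : ∀ x ∈ A, ∀ z ∈ B, f {x, z} ∈ Finset.Icc 1 p)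
    (hB : B.card = 2 * s * p) (hA : m * p * (2 * p) ^ s ≤ A.card) :
    ∃ a, ∃ S ⊆ B, S.card = s ∧ ∃ A' ⊆ A, A'.card = m ∧
      ∀ x ∈ A', ∀ z ∈ S, f {x, z} = a := by
  classical
  have hp0 : 0 < p := hp
  -- each x in A has a popular colour towards B
  have hstep1 : ∀ x ∈ A, ∃ a, a ∈ Finset.Icc 1 p ∧
      2 * s ≤ (B.filter fun z => f {x, z} = a).card := by
    intro x hx
    obtain ⟨a, ha, hcard⟩ := fiber_max_aux p hp B (fun z => f {x, z}) (fun z hz => hfA x hx z hz)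
    refine ⟨a, ha, ?_⟩
    have h' : p * (2 * s) ≤ p * (B.filter fun z => f {x, z} = a).card := by
      rw [hB] at hcard
      calc p * (2*s) = 2*s*p := by ring
        _ ≤ _ := hcard
    exact Nat.le_of_mul_le_mul_left h' hp0
  set F : ℕ → ℕ := fun x =>
    if h : ∃ a, a ∈ Finset.Icc 1 p ∧ 2 * s ≤ (B.filter fun z => f {x, z} = a).card then
      h.choose else 0 with hF
  have hFmem : ∀ x ∈ A, F x ∈ Finset.Icc 1 p := by
    intro x hx
    have h := hstep1 x hx
    simp only [hF, dif_pos h]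
    exact h.choose_spec.1
  have hFspec : ∀ x ∈ A, 2 * s ≤ (B.filter fun z => f {x, z} = F x).card := by
    intro x hx
    have h := hstep1 x hx
    simp only [hF, dif_pos h]
    exact h.choose_spec.2
  -- pigeonhole A over F
  obtain ⟨a, _, hAfib⟩ := fiber_max_aux p hp A F hFmem
  set A₁ := A.filter fun x => F x = a with hA₁
  have hA1sub : A₁ ⊆ A := Finset.filter_subset _ _
  have hA1card : m * (2 * p) ^ s ≤ A₁.card := by
    have h' : p * (m * (2*p)^s) ≤ p * A₁.card := by
      calc p * (m * (2*p)^s) = m * p * (2*p)^s := by ring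
        _ ≤ A.card := hA
        _ ≤ p * A₁.card := hAfib
    exact Nat.le_of_mul_le_mul_left h' hp0
  have hBx : ∀ x ∈ A₁, 2 * s ≤ (B.filter fun z => f {x, z} = a).card := by
    intro x hx
    have hxA := hA1sub hx
    have h1 := hFspec x hxA
    have hfx : F x = a := (Finset.mem_filter.mp hx).2
    rwa [hfx] at h1
  -- double counting
  set P := B.powersetCard s with hP
  have key : ∃ S ∈ P, m ≤ (A₁.filter fun x => ∀ z ∈ S, f {x, z} = a).card := by
    by_contra hno
    push_neg at hno
    have hxcount : ∀ x ∈ A₁,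
        Nat.choose (2*s) s ≤ (P.filter fun S => ∀ z ∈ S, f {x, z} = a).card := by
      intro x hx
      have heq : (P.filter fun S => ∀ z ∈ S, f {x, z} = a)
          = (B.filter fun z => f {x, z} = a).powersetCard s := by
        ext S
        simp only [hP, Finset.mem_filter, Finset.mem_powersetCard]
        constructor
        · rintro ⟨⟨hSB, hScard⟩, hall⟩
          exact ⟨fun z hz => Finset.mem_filter.mpr ⟨hSB hz, hall z hz⟩, hScard⟩
        · rintro ⟨hS, hScard⟩
          exact ⟨⟨fun z hz => (Finset.mem_filter.mp (hS hz)).1, hScard⟩,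
            fun z hz => (Finset.mem_filter.mp (hS hz)).2⟩
      rw [heq, Finset.card_powersetCard]
      exact Nat.choose_le_choose s (hBx x hx)
    have hsum1 : A₁.card * Nat.choose (2*s) s
        ≤ ∑ x ∈ A₁, (P.filter fun S => ∀ z ∈ S, f {x, z} = a).card := by
      simpa using Finset.card_nsmul_le_sum A₁ _ _ hxcount
    have hswap : ∑ x ∈ A₁, (P.filter fun S => ∀ z ∈ S, f {x, z} = a).card
        = ∑ S ∈ P, (A₁.filter fun x => ∀ z ∈ S, f {x, z} = a).card := by
      simp only [Finset.card_filter]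
      exact Finset.sum_comm
    have hsum2 : ∑ S ∈ P, (A₁.filter fun x => ∀ z ∈ S, f {x, z} = a).card
        ≤ P.card * (m - 1) := by
      refine le_trans (Finset.sum_le_card_nsmul _ _ (m-1) ?_) (by simp)
      intro S hS
      have := hno S hS
      omega
    have hPcard : P.card = Nat.choose (2*s*p) s := by
      rw [hP, Finset.card_powersetCard, hB]
    have hQpos : 0 < (2*p)^s * Nat.choose (2*s) s := by
      have h1 : 0 < (2*p)^s := pow_pos (by omega) s
      have h2 : 0 < Nat.choose (2*s) s := Nat.choose_pos (by omega)
      exact Nat.mul_pos h1 h2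
    have hcontr : m * ((2*p)^s * Nat.choose (2*s) s)
        ≤ (m-1) * ((2*p)^s * Nat.choose (2*s) s) := by
      calc m * ((2*p)^s * Nat.choose (2*s) s)
          = (m * (2*p)^s) * Nat.choose (2*s) s := by ring
        _ ≤ A₁.card * Nat.choose (2*s) s := Nat.mul_le_mul_right _ hA1card
        _ ≤ ∑ x ∈ A₁, (P.filter fun S => ∀ z ∈ S, f {x, z} = a).card := hsum1
        _ = ∑ S ∈ P, (A₁.filter fun x => ∀ z ∈ S, f {x, z} = a).card := hswap
        _ ≤ P.card * (m - 1) := hsum2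
        _ = Nat.choose (2*s*p) s * (m-1) := by rw [hPcard]
        _ ≤ ((2*p)^s * Nat.choose (2*s) s) * (m-1) :=
            Nat.mul_le_mul_right _ (choose_bound_aux p s)
        _ = (m-1) * ((2*p)^s * Nat.choose (2*s) s) := by ring
    have hfin := Nat.le_of_mul_le_mul_right hcontr hQpos
    omega
  obtain ⟨S, hSP, hScount⟩ := key
  obtain ⟨hSB, hScard⟩ := Finset.mem_powersetCard.mp hSP
  obtain ⟨A', hA'sub, hA'card⟩ := Finset.exists_subset_card_eq hScount
  refine ⟨a, S, hSB, hScard, A', (hA'sub.trans (Finset.filter_subset _ _)).trans hA1sub,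
    hA'card, ?_⟩
  intro x hx z hz
  exact (Finset.mem_filter.mp (hA'sub hx)).2 z hz
private lemma refine_lemma (p : ℕ) (hp : 1 ≤ p) (f : Finset ℕ → ℕ) (K : Finset ℕ) :
    ∀ Y : Finset ℕ, (∀ y ∈ Y, ∀ k ∈ K, f {y, k} ∈ Finset.Icc 1 p) →
      ∃ J ⊆ Y, ∃ d : ℕ → ℕ, Y.card ≤ J.card * p ^ K.card ∧
        ∀ y ∈ J, ∀ k ∈ K, f {y, k} = d k := by
  classical
  induction K using Finset.induction_on with
  | empty => intro Y _; exact ⟨Y, Finset.Subset.refl Y, fun _ => 0, by simp, by simp⟩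
  | @insert k₀ K hk₀ ih =>
    intro Y hY
    obtain ⟨J₁, hJ₁Y, d, hJ₁card, hJ₁⟩ :=
      ih Y (fun y hy k hk => hY y hy k (Finset.mem_insert_of_mem hk))
    obtain ⟨aa, _, hfib⟩ := fiber_max_aux p hp J₁ (fun y => f {y, k₀})
        (fun y hy => hY y (hJ₁Y hy) k₀ (Finset.mem_insert_self _ _))
    refine ⟨J₁.filter fun y => f {y, k₀} = aa, (Finset.filter_subset _ _).trans hJ₁Y,
      Function.update d k₀ aa, ?_, ?_⟩
    · rw [Finset.card_insert_of_notMem hk₀, pow_succ]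
      calc Y.card ≤ J₁.card * p ^ K.card := hJ₁card
        _ ≤ (p * (J₁.filter fun y => f {y, k₀} = aa).card) * p ^ K.card :=
            Nat.mul_le_mul_right _ hfib
        _ = (J₁.filter fun y => f {y, k₀} = aa).card * (p ^ K.card * p) := by ring
    · intro y hy k hk
      rcases Finset.mem_insert.mp hk with rfl | hk'
      · rw [Function.update_self]
        exact (Finset.mem_filter.mp hy).2
      · rw [Function.update_of_ne (by rintro rfl; exact hk₀ hk')]
        exact hJ₁ y ((Finset.filter_subset _ _) hy) k hk'

private lemma triple_eq {i j k a b c : ℕ} (hij : i < j) (hjk : j < k)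
    (hab : a < b) (hbc : b < c) (h : ({i, j, k} : Finset ℕ) = ({a, b, c} : Finset ℕ)) :
    a = i ∧ b = j ∧ c = k := by
  have h1 : a ∈ ({i,j,k} : Finset ℕ) := by rw [h]; simp
  have h2 : b ∈ ({i,j,k} : Finset ℕ) := by rw [h]; simp
  have h3 : c ∈ ({i,j,k} : Finset ℕ) := by rw [h]; simp
  have h4 : i ∈ ({a,b,c} : Finset ℕ) := by rw [← h]; simp
  have h5 : j ∈ ({a,b,c} : Finset ℕ) := by rw [← h]; simp
  have h6 : k ∈ ({a,b,c} : Finset ℕ) := by rw [← h]; simp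
  simp only [Finset.mem_insert, Finset.mem_singleton] at h1 h2 h3 h4 h5 h6
  omega

private lemma numeric_aux (n p N : ℕ) (hn : 1 ≤ n) (hp : 2 ≤ p)
    (hN : (2 : ℝ) ^ ((100:ℝ) * n * Real.log p) ≤ (N : ℝ)) :
    3 * (n * (2*p)^(3*n+3)) ≤ N := by
  have hp1 : 1 ≤ p := by omega
  have h1 : 3 * (n * (2*p)^(3*n+3)) ≤ p ^ (15*n) := by
    calc 3 * (n * (2*p)^(3*n+3)) ≤ p^2 * (p^n * (p^2)^(3*n+3)) := by
          apply Nat.mul_le_mul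
          · nlinarith
          · apply Nat.mul_le_mul
            · calc n ≤ 2^n := Nat.le_of_lt (Nat.lt_two_pow_self (n := n))
                _ ≤ p^n := Nat.pow_le_pow_left hp n
            · apply Nat.pow_le_pow_left; nlinarith
      _ = p ^ (2 + (n + 2*(3*n+3))) := by rw [← pow_mul, ← pow_add, ← pow_add]
      _ ≤ p ^ (15*n) := Nat.pow_le_pow_right hp1 (by omega)
  have hp0 : (0:ℝ) < (p:ℝ) := by positivity
  have h2 : ((p:ℝ)) ^ (15*n) ≤ (2:ℝ) ^ ((100:ℝ) * n * Real.log p) := by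
    rw [show ((p:ℝ))^(15*n) = (p:ℝ)^(((15*n : ℕ)):ℝ) from (Real.rpow_natCast _ _).symm]
    rw [Real.rpow_def_of_pos hp0, Real.rpow_def_of_pos (by norm_num : (0:ℝ) < 2)]
    apply Real.exp_le_exp.mpr
    have hlogp : Real.log 2 ≤ Real.log p := by
      apply Real.log_le_log (by norm_num)
      exact_mod_cast hp
    have hlog2 : (0.6931471803 : ℝ) < Real.log 2 := Real.log_two_gt_d9
    have hlogp0 : (0:ℝ) ≤ Real.log p := le_trans (by norm_num) (le_trans hlog2.le hlogp)
    have hn1 : (1:ℝ) ≤ (n:ℝ) := by exact_mod_cast hn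
    push_cast
    nlinarith [mul_nonneg (mul_nonneg (le_trans zero_le_one hn1) hlogp0)
      (by nlinarith : (0:ℝ) ≤ 100 * Real.log 2 - 15)]
  have hfin : ((3 * (n * (2*p)^(3*n+3)) : ℕ) : ℝ) ≤ (N:ℝ) := by
    calc ((3 * (n * (2*p)^(3*n+3)) : ℕ) : ℝ) ≤ ((p ^ (15*n) : ℕ) : ℝ) := by exact_mod_cast h1
      _ = (p:ℝ)^(15*n) := by push_cast; ring
      _ ≤ (2:ℝ) ^ ((100:ℝ) * n * Real.log p) := h2
      _ ≤ (N:ℝ) := hN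
  exact_mod_cast hfin
/-- There is an absolute constant `C > 0` such that for all `n ≥ 1`, `p ≥ 2`
and `N ≥ 2^{C n log p}`: for every `f` mapping the pairs of `{0,…,N−1}` into `[p] = {1,…,p}`
and every `g : [p]³ → {red, blue}` (`true` = red, `false` = blue), the pair-construction
coloring `χ {i,j,k} = g (f {i,j}, f {j,k}, f {i,k})` (for `i < j < k`) contains a
monochromatic copy of `K_{n,n,n}^{(3)}`, i.e. there are disjoint `n`-element sets
`I, J, K ⊆ {0,…,N−1}` all of whose crossing triples get the same color. -/
theorem pair_construction_tripartite :
    ∃ C : ℝ, C > 0 ∧ ∀ n p N : ℕ, 1 ≤ n → 2 ≤ p →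
      (2 : ℝ) ^ (C * n * Real.log p) ≤ (N : ℝ) →
      ∀ f : Finset ℕ → ℕ,
        (∀ e : Finset ℕ, e ⊆ Finset.range N → e.card = 2 → f e ∈ Finset.Icc 1 p) →
        ∀ g : ℕ × ℕ × ℕ → Bool,
          ∃ (col : Bool) (I J K : Finset ℕ),
            I ⊆ Finset.range N ∧ J ⊆ Finset.range N ∧ K ⊆ Finset.range N ∧
            Disjoint I J ∧ Disjoint J K ∧ Disjoint I K ∧
            I.card = n ∧ J.card = n ∧ K.card = n ∧
            ∀ i ∈ I, ∀ j ∈ J, ∀ k ∈ K, ∀ a b c : ℕ,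
              ({i, j, k} : Finset ℕ) = {a, b, c} → a < b → b < c →
              g (f {a, b}, f {b, c}, f {a, c}) = col := by
  classical
  refine ⟨100, by norm_num, ?_⟩
  intro n p N hn hp hN f hf g
  have hp1 : 1 ≤ p := by omega
  set M := n * (2*p)^(3*n+3) with hM
  have h3M : 3 * M ≤ N := numeric_aux n p N hn hp hN
  -- the three blocks
  set X := Finset.Ico 0 M with hX
  set Y := Finset.Ico M (2*M) with hY
  set Z := Finset.Ico (2*M) (3*M) with hZ
  have hXcard : X.card = M := by simp [hX]
  have hYcard : Y.card = M := by rw [hY, Nat.card_Ico]; omega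
  have hZcard : Z.card = M := by rw [hZ, Nat.card_Ico]; omega
  have hXN : X ⊆ Finset.range N := by
    intro x hx; rw [hX, Finset.mem_Ico] at hx; rw [Finset.mem_range]; omega
  have hYN : Y ⊆ Finset.range N := by
    intro x hx; rw [hY, Finset.mem_Ico] at hx; rw [Finset.mem_range]; omega
  have hZN : Z ⊆ Finset.range N := by
    intro x hx; rw [hZ, Finset.mem_Ico] at hx; rw [Finset.mem_range]; omega
  -- pair values are in [p]
  have hpair : ∀ x y : ℕ, x ∈ Finset.range N → y ∈ Finset.range N → x ≠ y →
      f {x, y} ∈ Finset.Icc 1 p := by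
    intro x y hx hy hxy
    apply hf
    · intro t ht
      rcases Finset.mem_insert.mp ht with rfl | ht
      · exact hx
      · rw [Finset.mem_singleton] at ht; subst ht; exact hy
    · exact Finset.card_pair hxy
  -- size facts about M
  have h2p1 : 1 ≤ 2*p := by omega
  have hMZb : 2*(2*n)*p ≤ M := by
    calc 2*(2*n)*p = n * (4*p) := by ring
      _ ≤ n * (2*p)^2 := by
          apply Nat.mul_le_mul_left; nlinarith
      _ ≤ n * (2*p)^(3*n+3) := by
          apply Nat.mul_le_mul_left
          exact Nat.pow_le_pow_right h2p1 (by omega)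
  have hMX : (2*n*p) * p * (2*p)^(2*n) ≤ M := by
    calc (2*n*p) * p * (2*p)^(2*n) = n * ((2*p*p) * (2*p)^(2*n)) := by ring
      _ ≤ n * ((2*p)^2 * (2*p)^(2*n)) := by
          apply Nat.mul_le_mul_left
          apply Nat.mul_le_mul_right
          nlinarith
      _ = n * (2*p)^(2*n+2) := by rw [← pow_add]; ring_nf
      _ ≤ n * (2*p)^(3*n+3) := by
          apply Nat.mul_le_mul_left
          exact Nat.pow_le_pow_right h2p1 (by omega)
  have hMY : (n * p^(2*n)) * p * (2*p)^n ≤ M := by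
    calc (n * p^(2*n)) * p * (2*p)^n ≤ (n * (2*p)^(2*n)) * (2*p) * (2*p)^n := by
          apply Nat.mul_le_mul
          apply Nat.mul_le_mul
          apply Nat.mul_le_mul_left
          · exact Nat.pow_le_pow_left (by omega) _
          · omega
          · exact le_refl _
      _ = n * (2*p)^(2*n+1+n) := by rw [pow_add, pow_add]; ring
      _ ≤ n * (2*p)^(3*n+3) := by
          apply Nat.mul_le_mul_left
          exact Nat.pow_le_pow_right h2p1 (by omega)
  -- Step 0: choose Zb ⊆ Z of the right size
  obtain ⟨Zb, hZbZ, hZbcard⟩ := Finset.exists_subset_card_eq (hZcard ▸ hMZb)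
  -- Step 1: grid lemma on (X, Zb)
  have hppos : 0 < p := hp1
  obtain ⟨a₁, K₁, hK₁Zb, hK₁card, X₁, hX₁X, hX₁card, hfa₁⟩ :=
    grid_lemma p (2*n) (2*n*p) hp1 (by exact Nat.mul_pos (by omega) hp1) f X Zb
      (fun x hx z hz => hpair x z (hXN hx) (hZN (hZbZ hz)) (by
        rw [hX, Finset.mem_Ico] at hx
        have := hZbZ hz
        rw [hZ, Finset.mem_Ico] at this
        omega))
      hZbcard (by rw [hXcard]; exact hMX)
  -- Step 2: grid lemma on (Y, X₁)
  obtain ⟨a₂, I, hIX₁, hIcard, J₀, hJ₀Y, hJ₀card, hfa₂⟩ :=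
    grid_lemma p n (n * p^(2*n)) hp1 (by exact Nat.mul_pos hn (pow_pos hppos (2*n))) f Y X₁
      (fun y hy x hx => hpair y x (hYN hy) (hXN (hX₁X hx)) (by
        rw [hY, Finset.mem_Ico] at hy
        have := hX₁X hx
        rw [hX, Finset.mem_Ico] at this
        omega))
      hX₁card (by rw [hYcard]; exact hMY)
  -- Step 3: refine J₀ over K₁
  obtain ⟨J₁, hJ₁J₀, d, hJ₁card, hd⟩ :=
    refine_lemma p hp1 f K₁ J₀
      (fun y hy k hk => hpair y k (hYN (hJ₀Y hy)) (hZN (hZbZ (hK₁Zb hk))) (by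
        have h1 := hJ₀Y hy
        rw [hY, Finset.mem_Ico] at h1
        have h2 := hZbZ (hK₁Zb hk)
        rw [hZ, Finset.mem_Ico] at h2
        omega))
  have hJ₁n : n ≤ J₁.card := by
    rw [hK₁card, hJ₀card] at hJ₁card
    have hq : 0 < p ^ (2*n) := pow_pos hppos _
    exact Nat.le_of_mul_le_mul_right hJ₁card hq
  obtain ⟨J, hJJ₁, hJcard⟩ := Finset.exists_subset_card_eq hJ₁n
  -- Step 4: boolean pigeonhole on K₁
  obtain ⟨col, K, hKK₁, hKcard, hKcol⟩ :
      ∃ (col : Bool) (K : Finset ℕ), K ⊆ K₁ ∧ K.card = n ∧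
        ∀ k ∈ K, g (a₂, d k, a₁) = col := by
    set T := K₁.filter (fun k => g (a₂, d k, a₁) = true) with hT
    set Fk := K₁.filter (fun k => ¬ (g (a₂, d k, a₁) = true)) with hFk
    have hTF : T.card + Fk.card = 2*n := by
      rw [hT, hFk, Finset.card_filter_add_card_filter_not, hK₁card]
    rcases le_or_gt n T.card with hc | hc
    · obtain ⟨K, hKT, hKc⟩ := Finset.exists_subset_card_eq hc
      exact ⟨true, K, hKT.trans (Finset.filter_subset _ _), hKc,
        fun k hk => (Finset.mem_filter.mp (hKT hk)).2⟩
    · have hc' : n ≤ Fk.card := by omega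
      obtain ⟨K, hKF, hKc⟩ := Finset.exists_subset_card_eq hc'
      refine ⟨false, K, hKF.trans (Finset.filter_subset _ _), hKc, fun k hk => ?_⟩
      have := (Finset.mem_filter.mp (hKF hk)).2
      simpa using this
  -- assemble
  have hIsub : I ⊆ X := hIX₁.trans hX₁X
  have hJsub : J ⊆ Y := (hJJ₁.trans hJ₁J₀).trans hJ₀Y
  have hKsub : K ⊆ Z := (hKK₁.trans hK₁Zb).trans hZbZ
  have hIb : ∀ i ∈ I, i < M := fun i hi => by
    have := hIsub hi; rw [hX, Finset.mem_Ico] at this; omega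
  have hJb : ∀ j ∈ J, M ≤ j ∧ j < 2*M := fun j hj => by
    have := hJsub hj; rw [hY, Finset.mem_Ico] at this; omega
  have hKb : ∀ k ∈ K, 2*M ≤ k := fun k hk => by
    have := hKsub hk; rw [hZ, Finset.mem_Ico] at this; omega
  refine ⟨col, I, J, K, hIsub.trans hXN, hJsub.trans hYN, hKsub.trans hZN, ?_, ?_, ?_,
    hIcard, hJcard, hKcard, ?_⟩
  · rw [Finset.disjoint_left]
    intro x hx hx'
    have h1 := hIb x hx
    have h2 := (hJb x hx').1
    omega
  · rw [Finset.disjoint_left]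
    intro x hx hx'
    have h1 := (hJb x hx).2
    have h2 := hKb x hx'
    omega
  · rw [Finset.disjoint_left]
    intro x hx hx'
    have h1 := hIb x hx
    have h2 := hKb x hx'
    omega
  · intro i hi j hj k hk a b c habc hab hbc
    have hij : i < j := by
      have h1 := hIb i hi; have h2 := (hJb j hj).1; omega
    have hjk : j < k := by
      have h1 := (hJb j hj).2; have h2 := hKb k hk; omega
    obtain ⟨rfl, rfl, rfl⟩ := triple_eq hij hjk hab hbc habc
    have e1 : f {a, b} = a₂ := by
      rw [Finset.pair_comm]
      exact hfa₂ b (hJ₁J₀ (hJJ₁ hj)) a hi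
    have e2 : f {b, c} = d c := hd b (hJJ₁ hj) c (hKK₁ hk)
    have e3 : f {a, c} = a₁ := hfa₁ a (hIX₁ hi) c (hKK₁ hk)
    rw [e1, e2, e3]
    exact hKcol c hk
end

section
/- Let k ≥ 3 and let W be the 3-graph with vertex set {w, w_1, ..., w_k} (k+1 distinct vertices) and edges {w, w_i, w_{i+1}} for 1 ≤ i ≤ k−1 (the w-link of the path w_1 w_2 ⋯ w_k). Suppose a linear order < on V(W) and a labelling of ∂W by {1,2,3} form a valid 123-coloring of W, i.e., for every edge {u,v,w'} of W with u < v < w', the pair uv is labelled 1, vw' is labelled 2, and uw' is labelled 3. Then the sequence w_1, ..., w_k alternates with respect to <: either w_1 < w_2, w_2 > w_3, w_3 < w_4, ... or w_1 > w_2, w_2 < w_3, w_3 > w_4, .... -/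
lemma pairlab (ord : ℕ → ℕ) (lab : Finset ℕ → Fin 3) (w a b : ℕ)
    (hwa : ord w ≠ ord a) (hwb : ord w ≠ ord b) (hab : ord a ≠ ord b)
    (hedge : ∀ u v x : ℕ, ({w, a, b} : Finset ℕ) = {u, v, x} →
      ord u < ord v → ord v < ord x →
      lab {u, v} = 0 ∧ lab {v, x} = 1 ∧ lab {u, x} = 2) :
    ((ord a < ord w ∧ ord a < ord b) → lab {w, b} = 1) ∧
    ((ord w < ord a ∧ ord b < ord a) → lab {w, b} = 0) ∧
    (((ord w < ord a ∧ ord a < ord b) ∨ (ord b < ord a ∧ ord a < ord w)) →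
      lab {w, b} = 2) := by
  have e1 : ({w, a, b} : Finset ℕ) = {a, w, b} := by ext x; simp; tauto
  have e2 : ({w, a, b} : Finset ℕ) = {a, b, w} := by ext x; simp; tauto
  have e3 : ({w, a, b} : Finset ℕ) = {b, w, a} := by ext x; simp; tauto
  have e4 : ({w, a, b} : Finset ℕ) = {b, a, w} := by ext x; simp; tauto
  have epair : ({b, w} : Finset ℕ) = {w, b} := Finset.pair_comm b w
  refine ⟨?_, ?_, ?_⟩
  · rintro ⟨h1, h2⟩
    rcases lt_or_gt_of_ne hwb with h | h
    · exact (hedge a w b e1 h1 h).2.1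
    · have := (hedge a b w e2 h2 h).2.1
      rwa [epair] at this
  · rintro ⟨h1, h2⟩
    rcases lt_or_gt_of_ne hwb with h | h
    · exact (hedge w b a (by ext x; simp; tauto) h h2).1
    · have := (hedge b w a e3 h h1).1
      rwa [epair] at this
  · rintro (⟨h1, h2⟩ | ⟨h1, h2⟩)
    · exact (hedge w a b rfl h1 h2).2.2
    · have := (hedge b a w e4 h1 h2).2.2
      rwa [epair] at this

set_option maxHeartbeats 1000000 in
/-- Let `W` be the `w`-link of the path `w₁ w₂ ⋯ w_k` (`k ≥ 3`), i.e. the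
3-graph with (distinct) vertices `w, w₁, …, w_k` and edges `{w, wᵢ, wᵢ₊₁}` for `1 ≤ i ≤ k−1`.
Suppose a linear order (given by a function `ord`, injective on the vertex set) and a
labelling `lab` of the shadow by `{1,2,3}` (here `Fin 3`, with `0,1,2` standing for `1,2,3`)
form a valid 123-coloring: for every edge `{u,v,x}` with `u < v < x`, `uv` is labelled `1`,
`vx` is labelled `2` and `ux` is labelled `3`. Then `w₁, …, w_k` alternates in the order:
either `w₁ < w₂ > w₃ < w₄ > ⋯` or `w₁ > w₂ < w₃ > w₄ < ⋯`. -/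
theorem link_path_alternates (k : ℕ) (hk : 3 ≤ k) (w : ℕ) (ws : ℕ → ℕ)
    (hinj : Set.InjOn ws (Set.Icc 1 k)) (hw : ∀ i, 1 ≤ i → i ≤ k → ws i ≠ w)
    (ord : ℕ → ℕ) (hord : Set.InjOn ord (insert w (ws '' Set.Icc 1 k)))
    (lab : Finset ℕ → Fin 3)
    (h123 : ∀ i, 1 ≤ i → i < k → ∀ u v x : ℕ,
      ({w, ws i, ws (i + 1)} : Finset ℕ) = {u, v, x} →
      ord u < ord v → ord v < ord x →
      lab {u, v} = 0 ∧ lab {v, x} = 1 ∧ lab {u, x} = 2) :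
    (∀ i, 1 ≤ i → i < k →
      (Odd i → ord (ws i) < ord (ws (i + 1))) ∧
      (Even i → ord (ws (i + 1)) < ord (ws i))) ∨
    (∀ i, 1 ≤ i → i < k →
      (Odd i → ord (ws (i + 1)) < ord (ws i)) ∧
      (Even i → ord (ws i) < ord (ws (i + 1)))) := by
  have hmem : ∀ i, 1 ≤ i → i ≤ k → ws i ∈ insert w (ws '' Set.Icc 1 k) := by
    intro i h1 h2
    exact Set.mem_insert_of_mem _ ⟨i, ⟨h1, h2⟩, rfl⟩
  have hwmem : w ∈ insert w (ws '' Set.Icc 1 k) := Set.mem_insert _ _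
  have hdw : ∀ i, 1 ≤ i → i ≤ k → ord w ≠ ord (ws i) := by
    intro i h1 h2 h
    exact hw i h1 h2 (hord (hmem i h1 h2) hwmem h.symm)
  have hdd : ∀ i j, 1 ≤ i → i ≤ k → 1 ≤ j → j ≤ k → i ≠ j →
      ord (ws i) ≠ ord (ws j) := by
    intro i j hi1 hi2 hj1 hj2 hij h
    exact hij (hinj ⟨hi1, hi2⟩ ⟨hj1, hj2⟩ (hord (hmem i hi1 hi2) (hmem j hj1 hj2) h))
  have key : ∀ i, 1 ≤ i → i + 1 < k →
      (ord (ws i) < ord (ws (i + 1)) ↔ ord (ws (i + 2)) < ord (ws (i + 1))) := by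
    intro i h1 h2
    have hi : i < k := by omega
    have hWA : ord w ≠ ord (ws i) := hdw i h1 (by omega)
    have hWB : ord w ≠ ord (ws (i + 1)) := hdw (i + 1) (by omega) (by omega)
    have hWC : ord w ≠ ord (ws (i + 2)) := hdw (i + 2) (by omega) (by omega)
    have hAB : ord (ws i) ≠ ord (ws (i + 1)) :=
      hdd i (i + 1) h1 (by omega) (by omega) (by omega) (by omega)
    have hCB : ord (ws (i + 2)) ≠ ord (ws (i + 1)) :=
      hdd (i + 2) (i + 1) (by omega) (by omega) (by omega) (by omega) (by omega)
    obtain ⟨L1min, L1max, L1mid⟩ :=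
      pairlab ord lab w (ws i) (ws (i + 1)) hWA hWB hAB (h123 i h1 hi)
    have e5 : ({w, ws (i + 1), ws (i + 1 + 1)} : Finset ℕ)
        = {w, ws (i + 2), ws (i + 1)} := by
      have : i + 1 + 1 = i + 2 := rfl
      rw [this]
      ext y; simp; tauto
    have hedge2 : ∀ u v x : ℕ, ({w, ws (i + 2), ws (i + 1)} : Finset ℕ) = {u, v, x} →
        ord u < ord v → ord v < ord x →
        lab {u, v} = 0 ∧ lab {v, x} = 1 ∧ lab {u, x} = 2 := by
      intro u v x h hu hv
      exact h123 (i + 1) (by omega) h2 u v x (e5.trans h) hu hv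
    obtain ⟨L2min, L2max, L2mid⟩ :=
      pairlab ord lab w (ws (i + 2)) (ws (i + 1)) hWC hWB hCB hedge2
    set W := ord w
    set A := ord (ws i)
    set B := ord (ws (i + 1))
    set C := ord (ws (i + 2))
    have hA : (A < W ∧ A < B) ∨ (W < A ∧ B < A) ∨
        ((W < A ∧ A < B) ∨ (B < A ∧ A < W)) := by omega
    have hC : (C < W ∧ C < B) ∨ (W < C ∧ B < C) ∨
        ((W < C ∧ C < B) ∨ (B < C ∧ C < W)) := by omega
    rcases hA with hA | hA | hA <;> rcases hC with hC | hC | hC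
    · omega
    · have := L1min hA; rw [L2max hC] at this; exact absurd this (by decide)
    · have := L1min hA; rw [L2mid hC] at this; exact absurd this (by decide)
    · have := L1max hA; rw [L2min hC] at this; exact absurd this (by decide)
    · omega
    · have := L1max hA; rw [L2mid hC] at this; exact absurd this (by decide)
    · have := L1mid hA; rw [L2min hC] at this; exact absurd this (by decide)
    · have := L1mid hA; rw [L2max hC] at this; exact absurd this (by decide)
    · omega
  have flip : ∀ i, 1 ≤ i → i + 1 < k →
      (ord (ws (i + 1)) < ord (ws (i + 2)) ↔ ¬ ord (ws i) < ord (ws (i + 1))) := by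
    intro i h1 h2
    have hk1 := key i h1 h2
    have hCB : ord (ws (i + 2)) ≠ ord (ws (i + 1)) :=
      hdd (i + 2) (i + 1) (by omega) (by omega) (by omega) (by omega) (by omega)
    constructor
    · intro h hPi
      have := hk1.mp hPi
      omega
    · intro h
      have : ¬ ord (ws (i + 2)) < ord (ws (i + 1)) := fun hc => h (hk1.mpr hc)
      omega
  have hne : ∀ i, 1 ≤ i → i < k → ord (ws i) ≠ ord (ws (i + 1)) := by
    intro i h1 h2
    exact hdd i (i + 1) h1 (by omega) (by omega) (by omega) (by omega)
  by_cases hP1 : ord (ws 1) < ord (ws 2)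
  · left
    have alt : ∀ i, 1 ≤ i → i < k →
        (Odd i → ord (ws i) < ord (ws (i + 1))) ∧
        (Even i → ¬ ord (ws i) < ord (ws (i + 1))) := by
      intro i
      induction i with
      | zero => intro h; omega
      | succ n ih =>
        intro h1 h2
        rcases Nat.eq_zero_or_pos n with hn | hn
        · subst hn
          exact ⟨fun _ => hP1, fun he => absurd he (by decide)⟩
        · obtain ⟨iho, ihe⟩ := ih hn (by omega)
          have hf := flip n hn h2
          constructor
          · intro hodd
            exact hf.mpr (ihe (Nat.not_odd_iff_even.mp (Nat.odd_add_one.mp hodd)))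
          · intro heven hP
            exact hf.mp hP (iho (Nat.not_even_iff_odd.mp (Nat.even_add_one.mp heven)))
    intro i h1 h2
    obtain ⟨o, e⟩ := alt i h1 h2
    refine ⟨o, fun he => ?_⟩
    have := e he
    have := hne i h1 h2
    omega
  · right
    have alt : ∀ i, 1 ≤ i → i < k →
        (Odd i → ¬ ord (ws i) < ord (ws (i + 1))) ∧
        (Even i → ord (ws i) < ord (ws (i + 1))) := by
      intro i
      induction i with
      | zero => intro h; omega
      | succ n ih =>
        intro h1 h2
        rcases Nat.eq_zero_or_pos n with hn | hn
        · subst hn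
          exact ⟨fun _ => hP1, fun he => absurd he (by decide)⟩
        · obtain ⟨iho, ihe⟩ := ih hn (by omega)
          have hf := flip n hn h2
          constructor
          · intro hodd hP
            exact hf.mp hP (ihe (Nat.not_odd_iff_even.mp (Nat.odd_add_one.mp hodd)))
          · intro heven
            exact hf.mpr (iho (Nat.not_even_iff_odd.mp (Nat.even_add_one.mp heven)))
    intro i h1 h2
    obtain ⟨o, e⟩ := alt i h1 h2
    refine ⟨fun ho => ?_, e⟩
    have := o ho
    have := hne i h1 h2
    omega
end
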